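/- arXiv:0808.3499 — 5 statements merged into one kernel-verified Lean document; each statement's English description precedes it below -/
import Mathlib

section
/- Assume condition (INV). If g ∈ ℂ^N[x] is a polynomial of degree at most S and y is a solution of y'(x) + B(x) y(x) = Q(x)^{−1} g(x) which is analytic at every one of the singular points p_0, …, p_{S+1} (equivalently, y is entire), then g ≡ 0 and y ≡ 0. -/
set_option maxHeartbeats 1000000

open Polynomial

/-- coefficient of product at sum of degree bounds -/
lemma coeff_mul_of_natDegree_le' {P f : ℂ[X]} {u v : ℕ}
    (hP : P.natDegree ≤ u) (hf : f.natDegree ≤ v) :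
    (P * f).coeff (u + v) = P.coeff u * f.coeff v := by
  rw [Polynomial.coeff_mul]
  rw [Finset.sum_eq_single (u, v)]
  · intro b hb hne
    rcases lt_or_ge u b.1 with h | h
    · rw [Polynomial.coeff_eq_zero_of_natDegree_lt (lt_of_le_of_lt hP h), zero_mul]
    · have : v < b.2 := by
        have := Finset.HasAntidiagonal.mem_antidiagonal.mp hb
        rcases lt_or_eq_of_le h with h' | h'
        · omega
        · exfalso; apply hne
          have h2 := Finset.HasAntidiagonal.mem_antidiagonal.mp hb
          have : b.2 = v := by omega
          exact Prod.ext h' this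
      rw [Polynomial.coeff_eq_zero_of_natDegree_lt (lt_of_le_of_lt hf this), mul_zero]
  · simp

open Polynomial Set

lemma aux_polygrowth : ∀ (D : ℕ) (f : ℂ → ℂ) (K : ℝ), Differentiable ℂ f →
    (∀ x : ℂ, ‖f x‖ ≤ K * max 1 ‖x‖ ^ D) →
    ∃ q : Polynomial ℂ, ∀ x, f x = q.eval x := by
  intro D
  induction D with
  | zero =>
    intro f K hf h
    have hb : Bornology.IsBounded (range f) := by
      rw [Metric.isBounded_iff_subset_closedBall 0]
      refine ⟨K, ?_⟩
      rintro - ⟨x, rfl⟩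
      simp only [Metric.mem_closedBall, dist_zero_right]
      simpa using h x
    refine ⟨Polynomial.C (f 0), fun x => ?_⟩
    rw [eval_C]
    exact hf.apply_eq_apply_of_bounded hb x 0
  | succ D ih =>
    intro f K hf h
    have hd : Differentiable ℂ (dslope f 0) := by
      rw [← differentiableOn_univ] at hf ⊢
      exact (Complex.differentiableOn_dslope Filter.univ_mem).mpr hf
    obtain ⟨M, hM⟩ : ∃ M, ∀ x ∈ Metric.closedBall (0:ℂ) 1, ‖dslope f 0 x‖ ≤ M :=
      (isCompact_closedBall 0 1).exists_bound_of_continuousOn hd.continuous.continuousOn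
    set K' : ℝ := max M 0 + (|K| + ‖f 0‖) with hK'
    have hb : ∀ x : ℂ, ‖dslope f 0 x‖ ≤ K' * max 1 ‖x‖ ^ D := by
      intro x
      have h1 : (1:ℝ) ≤ max 1 ‖x‖ ^ D := one_le_pow₀ (le_max_left _ _)
      have hK'0 : 0 ≤ K' := by positivity
      rcases le_or_gt ‖x‖ 1 with hx | hx
      · have h2 := hM x (by simpa [Metric.mem_closedBall, dist_zero_right] using hx)
        calc ‖dslope f 0 x‖ ≤ max M 0 := le_trans h2 (le_max_left _ _)
        _ ≤ K' := le_add_of_nonneg_right (by positivity)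
        _ ≤ K' * max 1 ‖x‖ ^ D := le_mul_of_one_le_right hK'0 h1
      · have hx0 : x ≠ 0 := by
          intro h0; rw [h0] at hx; simp at hx; linarith
        have hxpos : (0:ℝ) < ‖x‖ := by linarith
        have hmax : max 1 ‖x‖ = ‖x‖ := max_eq_right hx.le
        rw [dslope_of_ne f hx0, slope_def_field]
        have hnd : ‖(f x - f 0) / (x - 0)‖ = ‖f x - f 0‖ / ‖x‖ := by
          rw [sub_zero, norm_div]
        rw [hmax, hnd, div_le_iff₀ hxpos]
        have hfx := h x
        rw [hmax] at hfx
        have h2 : ‖f x - f 0‖ ≤ ‖f x‖ + ‖f 0‖ := norm_sub_le _ _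
        have h3 : (1:ℝ) ≤ ‖x‖ ^ D := one_le_pow₀ hx.le
        have h4 : ‖x‖ ^ (D+1) = ‖x‖ ^ D * ‖x‖ := pow_succ _ _
        have h5 : (1:ℝ) ≤ ‖x‖ ^ D * ‖x‖ := by nlinarith
        have h6 : K ≤ |K| := le_abs_self K
        have h7 : (0:ℝ) ≤ max M 0 := le_max_right M 0
        nlinarith [norm_nonneg (f 0), norm_nonneg (f x), abs_nonneg K]
    obtain ⟨q, hq⟩ := ih (dslope f 0) K' hd hb
    refine ⟨Polynomial.C (f 0) + Polynomial.X * q, fun x => ?_⟩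
    have hs := sub_smul_dslope f 0 x
    simp only [sub_zero, smul_eq_mul] at hs
    rw [eval_add, eval_C, eval_mul, eval_X, ← hq x]
    rw [hs]; ring

open Set Complex

lemma aux_growth {E : Type*} [NormedAddCommGroup E] [NormedSpace ℂ E] {y : ℂ → E}
    (hy : Differentiable ℂ y) {C R₀ : ℝ} (hC : 0 < C) (hR₀ : 1 ≤ R₀)
    (hb : ∀ x : ℂ, R₀ ≤ ‖x‖ → ‖deriv y x‖ ≤ C / ‖x‖ * (‖y x‖ + 1)) :
    ∃ K : ℝ, ∀ x, ‖y x‖ ≤ K * max 1 ‖x‖ ^ ⌈C⌉₊ := by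
  obtain ⟨M₀, hM₀⟩ : ∃ M, ∀ x ∈ Metric.closedBall (0:ℂ) R₀, ‖y x‖ ≤ M :=
    (isCompact_closedBall 0 R₀).exists_bound_of_continuousOn hy.continuous.continuousOn
  have hM₀0 : 0 ≤ M₀ := le_trans (norm_nonneg _) (hM₀ 0 (by simp; linarith))
  refine ⟨(M₀ + 1) * R₀ ^ ⌈C⌉₊, fun x => ?_⟩
  have hone : (1:ℝ) ≤ max 1 ‖x‖ ^ ⌈C⌉₊ := one_le_pow₀ (le_max_left _ _)
  have hR₀p : (0:ℝ) < R₀ := by linarith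
  have hRpow : (1:ℝ) ≤ R₀ ^ ⌈C⌉₊ := one_le_pow₀ hR₀
  rcases le_or_gt ‖x‖ R₀ with hx | hx
  · have h0 := hM₀ x (by simpa [Metric.mem_closedBall, dist_zero_right] using hx)
    have hprod : (1:ℝ) ≤ R₀ ^ ⌈C⌉₊ * max 1 ‖x‖ ^ ⌈C⌉₊ := by nlinarith
    have h2 := mul_le_mul_of_nonneg_left hprod (by linarith : (0:ℝ) ≤ M₀ + 1)
    calc ‖y x‖ ≤ M₀ := h0
    _ ≤ (M₀ + 1) * (R₀ ^ ⌈C⌉₊ * max 1 ‖x‖ ^ ⌈C⌉₊) := by linarith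
    _ = (M₀ + 1) * R₀ ^ ⌈C⌉₊ * max 1 ‖x‖ ^ ⌈C⌉₊ := by ring
  -- now R₀ < ‖x‖
  · set θ : ℝ := Complex.arg x with hθ
    set c : ℝ → ℂ := fun s => Complex.exp (↑s + ↑θ * Complex.I) with hc
    have habs : ∀ s : ℝ, ‖c s‖ = Real.exp s := by
      intro s
      rw [hc]
      simp [Complex.norm_exp]
    have hcd : ∀ s : ℝ, HasDerivAt c (c s) s := by
      intro s
      have h1 : HasDerivAt (fun s : ℝ => (↑s + ↑θ * Complex.I : ℂ)) 1 s := by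
        simpa using (Complex.ofRealCLM.hasDerivAt (x := s)).add_const (↑θ * Complex.I)
      have h2 : HasDerivAt Complex.exp (c s) ((s : ℂ) + ↑θ * Complex.I) := by
        simpa [hc] using Complex.hasDerivAt_exp ((s : ℂ) + ↑θ * Complex.I)
      have h3 := HasDerivAt.scomp s h2 h1
      rw [one_smul] at h3
      exact h3
    set f : ℝ → E := fun s => y (c s) with hf
    have hfd : ∀ s : ℝ, HasDerivAt f (c s • deriv y (c s)) s := fun s =>
      HasDerivAt.scomp s ((hy (c s)).hasDerivAt) (hcd s)
    set a : ℝ := Real.log R₀ with ha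
    set b : ℝ := Real.log ‖x‖ with hbb
    have hab : a ≤ b := Real.log_le_log hR₀p hx.le
    have hexpa : Real.exp a = R₀ := Real.exp_log hR₀p
    have hexpb : Real.exp b = ‖x‖ := Real.exp_log (by linarith)
    have key : ∀ t ∈ Set.Icc a b, ‖f t‖ ≤ gronwallBound M₀ C C (t - a) := by
      apply norm_le_gronwallBound_of_norm_deriv_right_le
      · exact (Continuous.comp hy.continuous (by fun_prop : Continuous c)).continuousOn
      · exact fun t _ => (hfd t).hasDerivWithinAt
      · apply hM₀
        simp only [Metric.mem_closedBall, dist_zero_right]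
        rw [habs a, hexpa]
      · intro t ht
        have hR : R₀ ≤ ‖c t‖ := by
          rw [habs t, ← hexpa]
          exact Real.exp_le_exp.mpr ht.1
        have hcpos : (0:ℝ) < ‖c t‖ := lt_of_lt_of_le hR₀p hR
        have := hb (c t) hR
        rw [norm_smul, habs t]
        calc Real.exp t * ‖deriv y (c t)‖ ≤ Real.exp t * (C / ‖c t‖ * (‖y (c t)‖ + 1)) := by
              apply mul_le_mul_of_nonneg_left this (Real.exp_nonneg t)
        _ = C * ‖f t‖ + C := by
              rw [habs t] at hcpos ⊢
              field_simp
              ring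
    have hxc : c b = x := by
      rw [hc]
      show Complex.exp (↑b + ↑θ * Complex.I) = x
      rw [Complex.exp_add, ← Complex.ofReal_exp, hexpb]
      exact Complex.norm_mul_exp_arg_mul_I x
    have h1 := key b ⟨hab, le_refl b⟩
    have hfb : f b = y x := by rw [hf]; simp only [hxc]
    rw [hfb] at h1
    have hgb : gronwallBound M₀ C C (b - a) ≤ (M₀ + 1) * Real.exp (C * b) := by
      rw [gronwallBound_of_K_ne_0 (ne_of_gt hC)]
      have ha0 : 0 ≤ a := Real.log_nonneg hR₀
      have e1 : Real.exp (C * (b - a)) ≤ Real.exp (C * b) := by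
        apply Real.exp_le_exp.mpr; nlinarith
      have e2 : (0:ℝ) < Real.exp (C * (b - a)) := Real.exp_pos _
      rw [div_self (ne_of_gt hC)]
      have e3 := mul_le_mul_of_nonneg_left e1 (by linarith : (0:ℝ) ≤ M₀ + 1)
      simp only [one_mul]
      nlinarith [Real.exp_pos (C * b)]
    have hx1 : (1:ℝ) < ‖x‖ := lt_of_le_of_lt hR₀ hx
    have hrb : Real.exp (C * b) = ‖x‖ ^ (C : ℝ) := by
      rw [hbb, Real.rpow_def_of_pos (by linarith : (0:ℝ) < ‖x‖)]
      ring_nf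
    have hrc : ‖x‖ ^ (C:ℝ) ≤ ‖x‖ ^ (⌈C⌉₊ : ℝ) :=
      Real.rpow_le_rpow_of_exponent_le (by linarith) (Nat.le_ceil C)
    rw [Real.rpow_natCast] at hrc
    have hmax : max 1 ‖x‖ = ‖x‖ := max_eq_right hx1.le
    rw [hmax]
    have hxp : (0:ℝ) < ‖x‖ ^ ⌈C⌉₊ := pow_pos (by linarith) _
    have h4 := mul_le_mul_of_nonneg_left hrc (by linarith : (0:ℝ) ≤ M₀ + 1)
    have h5 : (M₀ + 1) * ‖x‖ ^ ⌈C⌉₊ ≤ (M₀ + 1) * R₀ ^ ⌈C⌉₊ * ‖x‖ ^ ⌈C⌉₊ := by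
      nlinarith [mul_nonneg (by linarith : (0:ℝ) ≤ R₀ ^ ⌈C⌉₊ - 1)
        (mul_nonneg (by linarith : (0:ℝ) ≤ M₀ + 1) hxp.le)]
    nlinarith [Real.exp_pos (C * b)]

open Matrix Set Polynomial

lemma sum_smul_mulVec {n : ℕ} {ι : Type*} (s : Finset ι) (c : ι → ℂ)
    (Bm : ι → Matrix (Fin n) (Fin n) ℂ) (v : Fin n → ℂ) :
    (∑ j ∈ s, c j • Bm j) *ᵥ v = ∑ j ∈ s, c j • (Bm j *ᵥ v) := by
  ext i
  simp only [Matrix.mulVec, dotProduct, Finset.sum_apply, Matrix.sum_apply,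
    Matrix.smul_apply, Pi.smul_apply, smul_eq_mul, Finset.sum_mul, Finset.mul_sum]
  rw [Finset.sum_comm]
  exact Finset.sum_congr rfl fun j _ => Finset.sum_congr rfl fun l _ => by ring

/-- Lemma 5 (uniqueness lemma): under condition (INV), if `g` is a polynomial of degree
at most `S` and `y` is a solution of `y' + B(x) y = Q(x)⁻¹ g(x)` which is analytic at
every singular point `p 0, …, p (S+1)` — equivalently, entire — then `g ≡ 0` and `y ≡ 0`. -/
theorem stmt_6 (N S : ℕ) (hN : 1 ≤ N)
    (p : Fin (S + 2) → ℂ) (hp : Function.Injective p)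
    (B : Fin (S + 2) → Matrix (Fin N) (Fin N) ℂ)
    (hinv : ∀ k : ℕ,
      (∀ j, IsUnit ((k : ℂ) • (1 : Matrix (Fin N) (Fin N) ℂ) + B j)) ∧
        IsUnit ((k : ℂ) • (1 : Matrix (Fin N) (Fin N) ℂ) + ∑ j, B j))
    (g : Fin N → Polynomial ℂ) (hgdeg : ∀ i, (g i).degree ≤ (S : ℕ))
    (y : ℂ → Fin N → ℂ) (hyent : Differentiable ℂ y)
    (hy : ∀ x ∈ (Set.univ : Set ℂ) \ Set.range p,
      HasDerivAt y
        ((∏ j, (x - p j))⁻¹ • (fun i => (g i).eval x)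
          - (∑ j, (x - p j)⁻¹ • B j) *ᵥ y x) x) :
    (∀ i, g i = 0) ∧ ∀ x, y x = 0 := by
  classical
  -- basic facts
  have hyc : ∀ i, Differentiable ℂ (fun t => y t i) := fun i =>
    (ContinuousLinearMap.proj (R := ℂ) (φ := fun _ : Fin N => ℂ) i).differentiable.comp hyent
  have hcomp : ∀ (x : ℂ) (d : Fin N → ℂ), HasDerivAt y d x →
      ∀ i, HasDerivAt (fun t => y t i) (d i) x := by
    intro x d h i
    exact
      (ContinuousLinearMap.proj (R := ℂ) (φ := fun _ : Fin N => ℂ) i).hasFDerivAt.comp_hasDerivAt x h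
  set Qf : ℂ → ℂ := fun x => ∏ j, (x - p j) with hQfdef
  have hQne : ∀ x : ℂ, x ∉ Set.range p → Qf x ≠ 0 := by
    intro x hx
    apply Finset.prod_ne_zero_iff.mpr
    intro j _
    exact sub_ne_zero.mpr (fun h => hx ⟨j, h.symm⟩)
  -- the identity off the singular set, componentwise
  have hid0 : ∀ i x, x ∉ Set.range p →
      Qf x * deriv (fun t => y t i) x
        + ∑ l, (∑ j, (∏ m ∈ Finset.univ.erase j, (x - p m)) * (B j) i l) * y x l
      = (g i).eval x := by
    intro i x hx
    have hQ := hQne x hx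
    have hxp : ∀ j, x - p j ≠ 0 := fun j =>
      sub_ne_zero.mpr (fun h => hx ⟨j, h.symm⟩)
    have hder := (hcomp x _ (hy x ⟨trivial, hx⟩) i).deriv
    rw [hder]
    have hmv : ((∑ j, (x - p j)⁻¹ • B j) *ᵥ y x) i
        = ∑ j, (x - p j)⁻¹ * ∑ l, (B j) i l * y x l := by
      rw [sum_smul_mulVec]
      simp [Matrix.mulVec, dotProduct]
    simp only [Pi.sub_apply, Pi.smul_apply, smul_eq_mul, hmv]
    have hQj : ∀ j : Fin (S+2), Qf x * (x - p j)⁻¹ = ∏ m ∈ Finset.univ.erase j, (x - p m) := by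
      intro j
      have hQx : Qf x = (x - p j) * ∏ m ∈ Finset.univ.erase j, (x - p m) := by
        simp only [hQfdef]
        exact (Finset.mul_prod_erase _ _ (Finset.mem_univ j)).symm
      rw [hQx]
      rw [mul_comm (x - p j), mul_assoc, mul_inv_cancel₀ (hxp j), mul_one]
    have expand : Qf x * ((Qf x)⁻¹ * (g i).eval x - ∑ j, (x - p j)⁻¹ * ∑ l, (B j) i l * y x l)
        = (g i).eval x - ∑ j, (∏ m ∈ Finset.univ.erase j, (x - p m)) * ∑ l, (B j) i l * y x l := by
      rw [mul_sub, ← mul_assoc, mul_inv_cancel₀ hQ, one_mul, Finset.mul_sum]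
      congr 1
      refine Finset.sum_congr rfl fun j _ => ?_
      rw [← mul_assoc, hQj j]
    rw [expand]
    have swap : ∑ l, (∑ j, (∏ m ∈ Finset.univ.erase j, (x - p m)) * (B j) i l) * y x l
        = ∑ j, (∏ m ∈ Finset.univ.erase j, (x - p m)) * ∑ l, (B j) i l * y x l := by
      simp only [Finset.sum_mul, Finset.mul_sum]
      rw [Finset.sum_comm]
      congr 1; ext l; congr 1; ext j; ring
    rw [swap]
    ring
  -- extend the identity to all of ℂ by continuity
  have hdense : Dense (Set.range p)ᶜ :=
    Set.Countable.dense_compl ℂ (Set.finite_range p).countable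
  have hdercont : ∀ i, Continuous (deriv (fun t => y t i)) :=
    fun i => ((hyc i).contDiff (n := 1)).continuous_deriv le_rfl
  have hid : ∀ i x,
      Qf x * deriv (fun t => y t i) x
        + ∑ l, (∑ j, (∏ m ∈ Finset.univ.erase j, (x - p m)) * (B j) i l) * y x l
      = (g i).eval x := by
    intro i
    have hc1 : Continuous (fun x => Qf x * deriv (fun t => y t i) x
        + ∑ l, (∑ j, (∏ m ∈ Finset.univ.erase j, (x - p m)) * (B j) i l) * y x l) := by
      apply Continuous.add
      · exact (by fun_prop : Continuous Qf).mul (hdercont i)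
      · apply continuous_finset_sum
        intro l _
        exact (continuous_finset_sum _ fun j _ =>
          (continuous_finset_prod _ fun m _ => by fun_prop).mul continuous_const).mul
          ((hyc l).continuous)
    have hc2 : Continuous (fun x => (g i).eval x) := by fun_prop
    have := Continuous.ext_on hdense hc1 hc2 (fun x hx => hid0 i x hx)
    exact fun x => congrFun this x
  -- growth estimates
  set P : ℝ := ∑ j, ‖p j‖ with hP
  have hPnn : 0 ≤ P := Finset.sum_nonneg fun j _ => norm_nonneg _
  set R₀ : ℝ := 2 * P + 2 with hR₀def
  set cg : ℝ := ∑ i, ∑ k ∈ Finset.range (S + 1), ‖(g i).coeff k‖ with hcg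
  have hcgnn : 0 ≤ cg := Finset.sum_nonneg fun i _ =>
    Finset.sum_nonneg fun k _ => norm_nonneg _
  set L : Fin (S + 2) → ((Fin N → ℂ) →L[ℂ] (Fin N → ℂ)) :=
    fun j => LinearMap.toContinuousLinearMap ((B j).mulVecLin) with hL
  set cB : ℝ := ∑ j, ‖L j‖ with hcB
  have hcBnn : 0 ≤ cB := Finset.sum_nonneg fun j _ => norm_nonneg _
  set C : ℝ := cg * 2 ^ (S + 2) + 2 * cB + 1 with hC
  have hCpos : 0 < C := by
    rw [hC]
    have h1 : (0:ℝ) ≤ cg * 2 ^ (S + 2) := mul_nonneg hcgnn (by positivity)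
    linarith
  have hgev : ∀ (i : Fin N) (x : ℂ), 1 ≤ ‖x‖ → ‖(g i).eval x‖ ≤ cg * ‖x‖ ^ (S + 1) := by
    intro i x hx
    have hnd : (g i).natDegree < S + 1 :=
      Nat.lt_succ_of_le (natDegree_le_iff_degree_le.mpr (hgdeg i))
    rw [eval_eq_sum_range' hnd]
    calc ‖∑ k ∈ Finset.range (S + 1), (g i).coeff k * x ^ k‖
        ≤ ∑ k ∈ Finset.range (S + 1), ‖(g i).coeff k * x ^ k‖ := norm_sum_le _ _
      _ ≤ ∑ k ∈ Finset.range (S + 1), ‖(g i).coeff k‖ * ‖x‖ ^ (S + 1) := by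
          apply Finset.sum_le_sum
          intro k hk
          rw [norm_mul, norm_pow]
          have hkle : k ≤ S + 1 := Nat.le_of_lt_succ (Nat.lt_succ_of_lt (Finset.mem_range.mp hk))
          exact mul_le_mul_of_nonneg_left (pow_le_pow_right₀ hx hkle) (norm_nonneg _)
      _ = (∑ k ∈ Finset.range (S + 1), ‖(g i).coeff k‖) * ‖x‖ ^ (S + 1) := by
          rw [Finset.sum_mul]
      _ ≤ cg * ‖x‖ ^ (S + 1) := by
          apply mul_le_mul_of_nonneg_right _ (pow_nonneg (norm_nonneg _) _)
          rw [hcg]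
          exact Finset.single_le_sum (f := fun i => ∑ k ∈ Finset.range (S + 1), ‖(g i).coeff k‖)
            (fun i _ => Finset.sum_nonneg fun k _ => norm_nonneg _) (Finset.mem_univ i)
  have hbound : ∀ x : ℂ, R₀ ≤ ‖x‖ → ‖deriv y x‖ ≤ C / ‖x‖ * (‖y x‖ + 1) := by
    intro x hxR
    have hx2 : 2 ≤ ‖x‖ := by
      rw [hR₀def] at hxR; linarith
    have hx0 : (0:ℝ) < ‖x‖ := by linarith
    have hpj : ∀ j, ‖p j‖ ≤ P :=
      fun j => Finset.single_le_sum (f := fun j => ‖p j‖) (fun j _ => norm_nonneg _)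
        (Finset.mem_univ j)
    have hfac : ∀ j, ‖x‖ / 2 ≤ ‖x - p j‖ := by
      intro j
      have h1 : ‖x‖ - ‖p j‖ ≤ ‖x - p j‖ := norm_sub_norm_le x (p j)
      have h2 : ‖p j‖ ≤ ‖x‖ / 2 := by
        have := hpj j
        rw [hR₀def] at hxR
        linarith
      linarith
    have hfacpos : (0:ℝ) < ‖x‖ / 2 := by linarith
    have hxnot : x ∉ Set.range p := by
      rintro ⟨j, rfl⟩
      have := hpj j
      rw [hR₀def] at hxR
      linarith
    have hQlow : (‖x‖ / 2) ^ (S + 2) ≤ ‖Qf x‖ := by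
      have : ‖Qf x‖ = ∏ j, ‖x - p j‖ := by
        simp only [hQfdef]
        exact norm_prod _ _
      rw [this]
      calc (‖x‖ / 2) ^ (S + 2) = ∏ _j : Fin (S + 2), (‖x‖ / 2) := by
            rw [Finset.prod_const, Finset.card_univ, Fintype.card_fin]
        _ ≤ ∏ j, ‖x - p j‖ :=
            Finset.prod_le_prod (fun j _ => le_of_lt hfacpos) (fun j _ => hfac j)
    have hQpos : (0:ℝ) < ‖Qf x‖ := lt_of_lt_of_le (pow_pos hfacpos _) hQlow
    have hder := (hy x ⟨trivial, hxnot⟩).deriv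
    rw [hder]
    have hn1 : ‖(Qf x)⁻¹ • (fun i => (g i).eval x)‖ ≤ cg * 2 ^ (S + 2) / ‖x‖ := by
      rw [norm_smul, norm_inv]
      have hge : ‖(fun i => (g i).eval x)‖ ≤ cg * ‖x‖ ^ (S + 1) := by
        apply pi_norm_le_iff_of_nonneg
          (mul_nonneg hcgnn (pow_nonneg (norm_nonneg _) _)) |>.mpr
        intro i
        exact hgev i x (by linarith)
      calc ‖Qf x‖⁻¹ * ‖(fun i => (g i).eval x)‖
          ≤ ((‖x‖ / 2) ^ (S + 2))⁻¹ * (cg * ‖x‖ ^ (S + 1)) := by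
            apply mul_le_mul (inv_anti₀ (pow_pos hfacpos _) hQlow) hge
              (norm_nonneg _) (inv_nonneg.mpr (pow_nonneg (by linarith) _))
        _ = cg * 2 ^ (S + 2) / ‖x‖ := by
            rw [div_pow, inv_div, div_mul_eq_mul_div,
              div_eq_div_iff (pow_pos hx0 (S + 2)).ne' (ne_of_gt hx0), pow_succ]
            ring
    have hn2 : ‖(∑ j, (x - p j)⁻¹ • B j) *ᵥ y x‖ ≤ 2 * cB / ‖x‖ * ‖y x‖ := by
      rw [sum_smul_mulVec]
      calc ‖∑ j, (x - p j)⁻¹ • (B j *ᵥ y x)‖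
          ≤ ∑ j, ‖(x - p j)⁻¹ • (B j *ᵥ y x)‖ := norm_sum_le _ _
        _ ≤ ∑ j, 2 / ‖x‖ * (‖L j‖ * ‖y x‖) := by
            apply Finset.sum_le_sum
            intro j _
            rw [norm_smul, norm_inv]
            have h1 : ‖(x - p j)‖⁻¹ ≤ 2 / ‖x‖ := by
              have h := inv_anti₀ hfacpos (hfac j)
              simpa [inv_div] using h
            have h2 : ‖B j *ᵥ y x‖ ≤ ‖L j‖ * ‖y x‖ := by
              have hBL : B j *ᵥ y x = L j (y x) := by
                simp [hL]
              rw [hBL]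
              exact (L j).le_opNorm (y x)
            exact mul_le_mul h1 h2 (norm_nonneg _) (div_nonneg (by norm_num) (by linarith))
        _ = ∑ j, ‖L j‖ * (2 / ‖x‖ * ‖y x‖) :=
            Finset.sum_congr rfl fun j _ => by ring
        _ = cB * (2 / ‖x‖ * ‖y x‖) := by rw [← Finset.sum_mul, ← hcB]
        _ = 2 * cB / ‖x‖ * ‖y x‖ := by ring
    calc ‖(Qf x)⁻¹ • (fun i => (g i).eval x) - (∑ j, (x - p j)⁻¹ • B j) *ᵥ y x‖
        ≤ ‖(Qf x)⁻¹ • (fun i => (g i).eval x)‖ + ‖(∑ j, (x - p j)⁻¹ • B j) *ᵥ y x‖ :=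
          norm_sub_le _ _
      _ ≤ cg * 2 ^ (S + 2) / ‖x‖ + 2 * cB / ‖x‖ * ‖y x‖ := add_le_add hn1 hn2
      _ ≤ C / ‖x‖ * (‖y x‖ + 1) := by
          rw [hC]
          have hyn : 0 ≤ ‖y x‖ := norm_nonneg _
          have hcomb : cg * 2 ^ (S + 2) / ‖x‖ + 2 * cB / ‖x‖ * ‖y x‖
              = (cg * 2 ^ (S + 2) + 2 * cB * ‖y x‖) / ‖x‖ := by ring
          rw [hcomb, div_mul_eq_mul_div]
          have h2p : (0:ℝ) ≤ (2:ℝ) ^ (S + 2) := by positivity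
          gcongr
          nlinarith [mul_nonneg (mul_nonneg hcgnn h2p) hyn, mul_nonneg hcBnn hyn,
            mul_nonneg hcgnn h2p]
  -- polynomial growth of y, hence y is a polynomial
  obtain ⟨K, hK⟩ := aux_growth hyent hCpos (by rw [hR₀def]; linarith) hbound
  have hypoly : ∀ i, ∃ q : Polynomial ℂ, ∀ x, y x i = q.eval x := by
    intro i
    apply aux_polygrowth ⌈C⌉₊ (fun t => y t i) K (hyc i)
    intro x
    exact le_trans (norm_le_pi_norm (y x) i) (hK x)
  choose yp hyp using hypoly
  -- polynomial versions of Q and the residue factors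
  set Qp : Polynomial ℂ := ∏ j, (Polynomial.X - Polynomial.C (p j)) with hQp
  set Rp : Fin (S + 2) → Polynomial ℂ :=
    fun j => ∏ m ∈ Finset.univ.erase j, (Polynomial.X - Polynomial.C (p m)) with hRp
  set Ap : Fin N → Fin N → Polynomial ℂ :=
    fun i l => ∑ j, Polynomial.C ((B j) i l) * Rp j with hAp
  have hQpm : Qp.Monic := monic_prod_of_monic _ _ fun j _ => monic_X_sub_C (p j)
  have hQpdeg : Qp.natDegree = S + 2 := by
    rw [hQp, natDegree_prod_of_monic _ _ (fun j _ => monic_X_sub_C _)]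
    simp [natDegree_X_sub_C]
  have hRpm : ∀ j, (Rp j).Monic := fun j =>
    monic_prod_of_monic _ _ fun m _ => monic_X_sub_C (p m)
  have hRpdeg : ∀ j, (Rp j).natDegree = S + 1 := by
    intro j
    rw [hRp]
    rw [natDegree_prod_of_monic _ _ (fun m _ => monic_X_sub_C _)]
    simp [natDegree_X_sub_C, Finset.card_erase_of_mem]
  have hApdeg : ∀ i l, (Ap i l).natDegree ≤ S + 1 := by
    intro i l
    rw [hAp]
    apply Polynomial.natDegree_sum_le_of_forall_le
    intro j _
    apply le_trans (natDegree_mul_le)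
    rw [natDegree_C, hRpdeg j]
    omega
  have hApcoeff : ∀ i l, (Ap i l).coeff (S + 1) = ∑ j, (B j) i l := by
    intro i l
    rw [hAp, finset_sum_coeff]
    apply Finset.sum_congr rfl
    intro j _
    rw [coeff_C_mul]
    have : (Rp j).coeff (S + 1) = 1 := by
      rw [← hRpdeg j]
      exact (hRpm j).coeff_natDegree
    rw [this, mul_one]
  have hQpev : ∀ x, Qp.eval x = Qf x := by
    intro x
    simp [hQp, hQfdef, eval_prod]
  have hRpev : ∀ j x, (Rp j).eval x = ∏ m ∈ Finset.univ.erase j, (x - p m) := by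
    intro j x
    simp [hRp, eval_prod]
  -- the polynomial identity
  have hPID : ∀ i, Qp * Polynomial.derivative (yp i) + ∑ l, Ap i l * yp l = g i := by
    intro i
    apply Polynomial.funext
    intro x
    have hD : deriv (fun t => y t i) x = (Polynomial.derivative (yp i)).eval x := by
      have hfe : (fun t => y t i) = fun t => (yp i).eval t := funext fun t => hyp i t
      rw [hfe, Polynomial.deriv]
    rw [eval_add, eval_mul, hQpev, eval_finset_sum]
    have hterm : ∀ l, (Ap i l * yp l).eval x
        = (∑ j, (∏ m ∈ Finset.univ.erase j, (x - p m)) * (B j) i l) * y x l := by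
      intro l
      rw [eval_mul, ← hyp l x]
      congr 1
      rw [hAp, eval_finset_sum]
      apply Finset.sum_congr rfl
      intro j _
      rw [eval_mul, eval_C, hRpev]
      ring
    rw [Finset.sum_congr rfl (fun l _ => hterm l), ← hD]
    exact hid i x
  -- downward induction on coefficients
  have hstep : ∀ k : ℕ, (∀ l m, k < m → (yp l).coeff m = 0) → ∀ i, (yp i).coeff k = 0 := by
    intro k hk
    have hdeg : ∀ l, (yp l).natDegree ≤ k := fun l =>
      natDegree_le_iff_coeff_eq_zero.mpr (hk l)
    have hrel : ∀ i, (k : ℂ) * (yp i).coeff k + ∑ l, (∑ j, (B j) i l) * (yp l).coeff k = 0 := by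
      intro i
      have h := congrArg (fun q => Polynomial.coeff q (S + 1 + k)) (hPID i)
      simp only [coeff_add, finset_sum_coeff] at h
      have hg0 : (g i).coeff (S + 1 + k) = 0 := by
        apply coeff_eq_zero_of_degree_lt
        refine lt_of_le_of_lt (hgdeg i) ?_
        exact_mod_cast (by omega : S < S + 1 + k)
      have hterm2 : ∀ l, (Ap i l * yp l).coeff (S + 1 + k) = (∑ j, (B j) i l) * (yp l).coeff k := by
        intro l
        rw [coeff_mul_of_natDegree_le' (hApdeg i l) (hdeg l), hApcoeff]
      have hterm1 : (Qp * Polynomial.derivative (yp i)).coeff (S + 1 + k)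
          = (k : ℂ) * (yp i).coeff k := by
        rcases Nat.eq_zero_or_pos k with hk0 | hkpos
        · subst hk0
          obtain ⟨c, hc⟩ := Polynomial.natDegree_eq_zero.mp (Nat.le_zero.mp (hdeg i))
          rw [← hc, derivative_C, mul_zero, coeff_zero]
          simp
        · obtain ⟨k', rfl⟩ := Nat.exists_eq_succ_of_ne_zero (Nat.pos_iff_ne_zero.mp hkpos)
          have hder' : (Polynomial.derivative (yp i)).natDegree ≤ k' := by
            have h1 := Polynomial.natDegree_derivative_le (yp i)
            have h2 := hdeg i
            omega
          have e1 : S + 1 + (k' + 1) = (S + 2) + k' := by omega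
          rw [e1, coeff_mul_of_natDegree_le' (le_of_eq hQpdeg) hder',
            Polynomial.coeff_derivative]
          have hone : Qp.coeff (S + 2) = 1 := by
            rw [← hQpdeg]; exact hQpm.coeff_natDegree
          rw [hone, one_mul]
          push_cast
          ring
      simp_rw [hterm2] at h
      rw [hterm1, hg0] at h
      exact h
    have hvec : (((k : ℂ) • (1 : Matrix (Fin N) (Fin N) ℂ) + ∑ j, B j) *ᵥ
        (fun l => (yp l).coeff k)) = 0 := by
      funext i
      have hLHS : (((k : ℂ) • (1 : Matrix (Fin N) (Fin N) ℂ) + ∑ j, B j) *ᵥ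
          (fun l => (yp l).coeff k)) i
          = (k : ℂ) * (yp i).coeff k + ∑ l, (∑ j, (B j) i l) * (yp l).coeff k := by
        rw [Matrix.add_mulVec, Matrix.smul_mulVec, Matrix.one_mulVec]
        simp only [Pi.add_apply, Pi.smul_apply, smul_eq_mul]
        congr 1
        simp only [Matrix.mulVec, dotProduct, Matrix.sum_apply, Finset.sum_mul]
      rw [hLHS]
      simp only [Pi.zero_apply]
      exact hrel i
    have hM := (hinv k).2
    have ha : (fun l => (yp l).coeff k) = 0 := by
      rw [← Matrix.one_mulVec (fun l => (yp l).coeff k), ← hM.val_inv_mul,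
        ← Matrix.mulVec_mulVec, hvec, Matrix.mulVec_zero]
    intro i
    exact congrFun ha i
  -- conclude all coefficients vanish
  set D₀ : ℕ := Finset.univ.sup (fun i => (yp i).natDegree) with hD₀
  have hzero : ∀ n k i, D₀ < k + n → (yp i).coeff k = 0 := by
    intro n
    induction n with
    | zero =>
      intro k i h
      apply coeff_eq_zero_of_natDegree_lt
      have hle : (yp i).natDegree ≤ D₀ := by
        rw [hD₀]
        exact Finset.le_sup (f := fun i => (yp i).natDegree) (Finset.mem_univ i)
      omega
    | succ n ih =>
      intro k i h
      exact hstep k (fun l m hm => ih m l (by omega)) i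
  have hypz : ∀ i, yp i = 0 := by
    intro i
    ext k
    simpa using hzero (D₀ + 1) k i (by omega)
  constructor
  · intro i
    have h := hPID i
    simp only [hypz, derivative_zero, mul_zero, zero_add] at h
    rw [← h]
    simp [hypz]
  · intro x
    funext i
    rw [hyp i x, hypz i]
    simp
end

section
/- Define the linear operators 𝒜_k on matrix-valued functions by (𝒜_k F)(x) = k Q'(x) F(x) + Q(x) B(x) F(x) + Q(x) F'(x). Then for every n ≥ S+1, writing n = (S+1)m + i with 0 ≤ i ≤ S, the function P_n^{(W)} defined by the Rodrigues-type formula satisfies P_n^{(W)}(x) = (𝒜_1 𝒜_2 ⋯ 𝒜_m)(x^i I)(x). As a consequence, each P_n^{(W)} is a matrix-valued polynomial in x. -/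
open Matrix Set

attribute [local instance] Matrix.linftyOpNormedAddCommGroup Matrix.linftyOpNormedSpace
  Matrix.linftyOpNormedRing Matrix.linftyOpNormedAlgebra

/-- The matrix-valued functions `P_n^{(V)}` given by the Rodrigues-type formula
`P_n^{(V)}(x) = V(x)⁻¹ (d/dx)^m [ x^i Q(x)^m V(x) ]`, where `n = (S+1) m + i`,
`0 ≤ i ≤ S`, and `Q(x) = Π (x - pⱼ)`. -/
noncomputable def RodriguesP (N S : ℕ) (p : Fin (S + 2) → ℂ)
    (V : ℂ → Matrix (Fin N) (Fin N) ℂ) (n : ℕ) (x : ℂ) : Matrix (Fin N) (Fin N) ℂ :=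
  (V x)⁻¹ *
    iteratedDeriv (n / (S + 1))
      (fun t => (t ^ (n % (S + 1)) * (∏ j, (t - p j)) ^ (n / (S + 1))) • V t) x

/-- The linear operators `𝒜ₖ F = k Q' F + Q B F + Q F'` on matrix-valued functions. -/
noncomputable def AOp (N S : ℕ) (p : Fin (S + 2) → ℂ)
    (B : Fin (S + 2) → Matrix (Fin N) (Fin N) ℂ) (k : ℕ)
    (F : ℂ → Matrix (Fin N) (Fin N) ℂ) : ℂ → Matrix (Fin N) (Fin N) ℂ :=
  fun x =>
    ((k : ℂ) * deriv (fun t => ∏ j, (t - p j)) x) • F x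
      + (∏ j, (x - p j)) • ((∑ j, (x - p j)⁻¹ • B j) * F x)
      + (∏ j, (x - p j)) • deriv F x


variable {N : ℕ}

/-- "is a matrix polynomial on V" -/
def IsPF (V : Set ℂ) (F : ℂ → Matrix (Fin N) (Fin N) ℂ) : Prop :=
  ∃ (d : ℕ) (c : ℕ → Matrix (Fin N) (Fin N) ℂ),
    ∀ x ∈ V, F x = ∑ k ∈ Finset.range d, x ^ k • c k

lemma pf_pad (c : ℕ → Matrix (Fin N) (Fin N) ℂ) {d d' : ℕ} (h : d ≤ d') (x : ℂ) :
    ∑ k ∈ Finset.range d, x ^ k • c k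
      = ∑ k ∈ Finset.range d', x ^ k • (if k < d then c k else 0) := by
  rw [← Finset.sum_subset (Finset.range_subset_range.mpr h)
    (fun k _ hk => by simp [Finset.mem_range.not.mp hk, not_lt.mp (Finset.mem_range.not.mp hk)])]
  · exact Finset.sum_congr rfl fun k hk => by simp [Finset.mem_range.mp hk]

lemma IsPF.add {V : Set ℂ} {F G : ℂ → Matrix (Fin N) (Fin N) ℂ}
    (hF : IsPF V F) (hG : IsPF V G) : IsPF V (fun x => F x + G x) := by
  obtain ⟨d1, c1, h1⟩ := hF
  obtain ⟨d2, c2, h2⟩ := hG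
  refine ⟨max d1 d2, fun k => (if k < d1 then c1 k else 0) + (if k < d2 then c2 k else 0),
    fun x hx => ?_⟩
  beta_reduce
  rw [h1 x hx, h2 x hx, pf_pad c1 (le_max_left d1 d2) x, pf_pad c2 (le_max_right d1 d2) x,
    ← Finset.sum_add_distrib]
  exact Finset.sum_congr rfl fun k _ => by rw [smul_add]

lemma IsPF.zero {V : Set ℂ} : IsPF V (fun _ => (0 : Matrix (Fin N) (Fin N) ℂ)) :=
  ⟨0, fun _ => 0, fun x _ => by simp⟩

lemma IsPF.const_smul {V : Set ℂ} {F : ℂ → Matrix (Fin N) (Fin N) ℂ} (s : ℂ)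
    (hF : IsPF V F) : IsPF V (fun x => s • F x) := by
  obtain ⟨d, c, h⟩ := hF
  exact ⟨d, fun k => s • c k, fun x hx => by
    beta_reduce
    rw [h x hx, Finset.smul_sum]
    exact Finset.sum_congr rfl fun k _ => smul_comm s (x ^ k) (c k)⟩

lemma IsPF.matmul {V : Set ℂ} {F : ℂ → Matrix (Fin N) (Fin N) ℂ}
    (A : Matrix (Fin N) (Fin N) ℂ) (hF : IsPF V F) : IsPF V (fun x => A * F x) := by
  obtain ⟨d, c, h⟩ := hF
  exact ⟨d, fun k => A * c k, fun x hx => by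
    beta_reduce
    rw [h x hx, Finset.mul_sum]
    exact Finset.sum_congr rfl fun k _ => (mul_smul_comm _ _ _)⟩

lemma IsPF.linsmul {V : Set ℂ} {F : ℂ → Matrix (Fin N) (Fin N) ℂ} (a : ℂ)
    (hF : IsPF V F) : IsPF V (fun x => (x - a) • F x) := by
  obtain ⟨d, c, h⟩ := hF
  refine ⟨d + 1, fun k => (if k = 0 then 0 else c (k - 1)) - a • (if k < d then c k else 0),
    fun x hx => ?_⟩
  have hx' : (x - a) • F x = x • F x - a • F x := by rw [sub_smul]
  beta_reduce
  rw [hx', h x hx]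
  have hxs : x • ∑ k ∈ Finset.range d, x ^ k • c k
      = ∑ k ∈ Finset.range (d+1), x ^ k • (if k = 0 then 0 else c (k - 1)) := by
    rw [Finset.sum_range_succ' (fun k => x ^ k • (if k = 0 then (0:Matrix (Fin N) (Fin N) ℂ) else c (k - 1)))]
    simp only [Nat.succ_ne_zero, if_false, Nat.add_sub_cancel, pow_zero, if_true, one_smul,
      Finset.smul_sum]
    rw [add_zero]
    exact Finset.sum_congr rfl fun k _ => by rw [smul_smul, pow_succ, mul_comm (x^k) x]
  rw [hxs, pf_pad c (Nat.le_succ d) x, Finset.smul_sum, ← Finset.sum_sub_distrib]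
  exact Finset.sum_congr rfl fun k _ => by rw [smul_sub, smul_comm a (x^k)]

lemma IsPF.finsum {V : Set ℂ} {ι : Type*} [DecidableEq ι] (s : Finset ι)
    (f : ι → ℂ → Matrix (Fin N) (Fin N) ℂ) (hf : ∀ j ∈ s, IsPF V (f j)) :
    IsPF V (fun x => ∑ j ∈ s, f j x) := by
  induction s using Finset.induction_on with
  | empty => simpa using IsPF.zero
  | @insert a s' hnot ih =>
    have := (hf a (Finset.mem_insert_self a s')).add
      (ih (fun j hj => hf j (Finset.mem_insert_of_mem hj)))
    simpa [Finset.sum_insert hnot] using this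

lemma IsPF.prodsmul {V : Set ℂ} {ι : Type*} [DecidableEq ι] (s : Finset ι) (q : ι → ℂ)
    {F : ℂ → Matrix (Fin N) (Fin N) ℂ} (hF : IsPF V F) :
    IsPF V (fun x => (∏ l ∈ s, (x - q l)) • F x) := by
  induction s using Finset.induction_on with
  | empty => simpa using hF
  | @insert a s' hnot ih =>
    have := ih.linsmul (q a)
    simpa [Finset.prod_insert hnot, mul_smul] using this

lemma IsPF.derivpf {V : Set ℂ} (hV : IsOpen V) {F : ℂ → Matrix (Fin N) (Fin N) ℂ}
    (hF : IsPF V F) : IsPF V (fun x => deriv F x) := by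
  obtain ⟨d, c, h⟩ := hF
  refine ⟨d, fun k => ((k + 1 : ℕ) : ℂ) • (if k + 1 < d then c (k+1) else 0), fun x hx => ?_⟩
  have hev : F =ᶠ[nhds x] (fun x => ∑ k ∈ Finset.range d, x ^ k • c k) :=
    Filter.eventuallyEq_of_mem (hV.mem_nhds hx) h
  beta_reduce
  refine hev.deriv_eq.trans ?_
  rw [
    (HasDerivAt.fun_sum fun k _ => (hasDerivAt_pow k x).smul_const (c k)).deriv]
  cases d with
  | zero => simp
  | succ e =>
    rw [Finset.sum_range_succ' (fun k => ((k:ℂ) * x ^ (k-1)) • c k),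
      Finset.sum_range_succ (fun k => x ^ k • (((k + 1 : ℕ) : ℂ) • (if k + 1 < e + 1 then c (k+1) else 0)))]
    simp only [Nat.cast_zero, zero_mul, zero_smul, add_zero, Nat.add_sub_cancel,
      Nat.lt_irrefl, Nat.add_lt_add_iff_right]
    rw [if_neg (by simp), smul_zero, smul_zero, add_zero]
    refine Finset.sum_congr rfl fun k hk => ?_
    rw [if_pos (Finset.mem_range.mp hk), mul_comm, ← smul_smul]

lemma IsPF.monone (i : ℕ) {V : Set ℂ} :
    IsPF V (fun x : ℂ => (x ^ i : ℂ) • (1 : Matrix (Fin N) (Fin N) ℂ)) :=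
  ⟨i + 1, fun k => if k = i then 1 else 0, fun x _ => by
    rw [Finset.sum_eq_single i (fun k _ hk => by simp [hk]) (by simp)]
    simp⟩

lemma hasDerivAt_Q {S : ℕ} (p : Fin (S + 2) → ℂ) (x : ℂ) :
    HasDerivAt (fun t => ∏ j, (t - p j))
      (∑ j, ∏ l ∈ Finset.univ.erase j, (x - p l)) x := by
  have h := HasDerivAt.fun_finsetProd (u := Finset.univ) (f := fun (j : Fin (S+2)) t => t - p j)
    (f' := fun _ => 1) (x := x) (fun i _ => (hasDerivAt_id x).sub_const (p i))
  simpa using h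

lemma derivQ {S : ℕ} (p : Fin (S + 2) → ℂ) (x : ℂ) :
    deriv (fun t => ∏ j, (t - p j)) x = ∑ j, ∏ l ∈ Finset.univ.erase j, (x - p l) :=
  (hasDerivAt_Q p x).deriv

lemma IsPF.congr {N : ℕ} {V : Set ℂ} {F G : ℂ → Matrix (Fin N) (Fin N) ℂ}
    (hG : IsPF V G) (h : ∀ x ∈ V, F x = G x) : IsPF V F := by
  obtain ⟨d, c, hc⟩ := hG
  exact ⟨d, c, fun x hx => (h x hx).trans (hc x hx)⟩


lemma IsPF.aop {N S : ℕ} {p : Fin (S + 2) → ℂ}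
    {B : Fin (S + 2) → Matrix (Fin N) (Fin N) ℂ} (a : ℕ)
    {F : ℂ → Matrix (Fin N) (Fin N) ℂ}
    (hF : IsPF {x : ℂ | ∀ j, x ≠ p j} F) :
    IsPF {x : ℂ | ∀ j, x ≠ p j} (AOp N S p B a F) := by
  set V : Set ℂ := {x : ℂ | ∀ j, x ≠ p j} with hV
  have hVopen : IsOpen V := by
    have : V = ⋂ j, {x : ℂ | x ≠ p j} := by ext x; simp [hV]
    rw [this]
    exact isOpen_iInter_of_finite fun j => isOpen_ne
  have term1 : IsPF V (fun x => ((a : ℂ) * deriv (fun t => ∏ j, (t - p j)) x) • F x) := by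
    refine IsPF.congr (G := fun x => ∑ j : Fin (S+2),
      (a : ℂ) • ((∏ l ∈ Finset.univ.erase j, (x - p l)) • F x)) ?_ ?_
    · exact IsPF.finsum _ _ fun j _ => ((hF.prodsmul (Finset.univ.erase j) p).const_smul (a:ℂ))
    · intro x _
      beta_reduce
      rw [derivQ, Finset.mul_sum, Finset.sum_smul]
      exact Finset.sum_congr rfl fun j _ => by rw [mul_smul]
  have term2 : IsPF V (fun x => (∏ j, (x - p j)) • ((∑ j, (x - p j)⁻¹ • B j) * F x)) := by
    refine IsPF.congr (G := fun x => ∑ j : Fin (S+2),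
      (∏ l ∈ Finset.univ.erase j, (x - p l)) • (B j * F x)) ?_ ?_
    · exact IsPF.finsum _ _ fun j _ => (hF.matmul (B j)).prodsmul (Finset.univ.erase j) p
    · intro x hx
      beta_reduce
      rw [Finset.sum_mul, Finset.smul_sum]
      refine Finset.sum_congr rfl fun j _ => ?_
      have hne : x - p j ≠ 0 := sub_ne_zero.mpr (hx j)
      rw [smul_mul_assoc, smul_smul, ← Finset.mul_prod_erase Finset.univ _ (Finset.mem_univ j)]
      rw [mul_comm (x - p j), mul_assoc, mul_inv_cancel₀ hne, mul_one]
  have term3 : IsPF V (fun x => (∏ j, (x - p j)) • deriv F x) := by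
    have := (hF.derivpf hVopen).prodsmul Finset.univ p
    simpa using this
  exact (term1.add term2).add term3

lemma foldr_isPF {N S : ℕ} {p : Fin (S + 2) → ℂ}
    {B : Fin (S + 2) → Matrix (Fin N) (Fin N) ℂ} (i : ℕ) (l : List ℕ) :
    IsPF {x : ℂ | ∀ j, x ≠ p j}
      (l.foldr (AOp N S p B) (fun t => (t ^ i : ℂ) • (1 : Matrix (Fin N) (Fin N) ℂ))) := by
  induction l with
  | nil => exact IsPF.monone i
  | cons a l ih => exact ih.aop a

noncomputable def Gfun (N S : ℕ) (p : Fin (S + 2) → ℂ)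
    (B : Fin (S + 2) → Matrix (Fin N) (Fin N) ℂ) (i m k : ℕ) :
    ℂ → Matrix (Fin N) (Fin N) ℂ :=
  ((List.range k).map (fun j => m - k + j + 1)).foldr (AOp N S p B)
    (fun t => (t ^ i : ℂ) • (1 : Matrix (Fin N) (Fin N) ℂ))

lemma Gfun_zero (N S : ℕ) (p : Fin (S + 2) → ℂ)
    (B : Fin (S + 2) → Matrix (Fin N) (Fin N) ℂ) (i m : ℕ) :
    Gfun N S p B i m 0 = fun t => (t ^ i : ℂ) • (1 : Matrix (Fin N) (Fin N) ℂ) := rfl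

lemma Gfun_succ (N S : ℕ) (p : Fin (S + 2) → ℂ)
    (B : Fin (S + 2) → Matrix (Fin N) (Fin N) ℂ) (i m k : ℕ) (hk : k < m) :
    Gfun N S p B i m (k + 1) = AOp N S p B (m - k) (Gfun N S p B i m k) := by
  unfold Gfun
  have hlist : (List.range (k+1)).map (fun j => m - (k+1) + j + 1)
      = (m - k) :: (List.range k).map (fun j => m - k + j + 1) := by
    rw [List.range_succ_eq_map, List.map_cons, List.map_map]
    congr 1
    · omega
    · refine List.map_congr_left fun j _ => ?_
      simp only [Function.comp_apply, Nat.succ_eq_add_one]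
      omega
  rw [hlist, List.foldr_cons]

lemma Gfun_isPF (N S : ℕ) (p : Fin (S + 2) → ℂ)
    (B : Fin (S + 2) → Matrix (Fin N) (Fin N) ℂ) (i m k : ℕ) :
    IsPF {x : ℂ | ∀ j, x ≠ p j} (Gfun N S p B i m k) := foldr_isPF i _

lemma IsPF.differentiableAt {N : ℕ} {V : Set ℂ} (hV : IsOpen V)
    {F : ℂ → Matrix (Fin N) (Fin N) ℂ} (hF : IsPF V F) {x : ℂ} (hx : x ∈ V) :
    DifferentiableAt ℂ F x := by
  obtain ⟨d, c, h⟩ := hF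
  have hev : (fun x => ∑ k ∈ Finset.range d, x ^ k • c k) =ᶠ[nhds x] F :=
    Filter.eventuallyEq_of_mem (hV.mem_nhds hx) (fun y hy => (h y hy).symm)
  exact (HasDerivAt.fun_sum fun k _ =>
    (hasDerivAt_pow k x).smul_const (c k)).differentiableAt.congr_of_eventuallyEq hev.symm

lemma isOpen_compl_p {S : ℕ} (p : Fin (S + 2) → ℂ) :
    IsOpen {x : ℂ | ∀ j, x ≠ p j} := by
  have : {x : ℂ | ∀ j, x ≠ p j} = ⋂ j, {x : ℂ | x ≠ p j} := by ext x; simp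
  rw [this]
  exact isOpen_iInter_of_finite fun j => isOpen_ne

/-- Proposition 1: for `n = (S+1)m + i ≥ S+1` (with `0 ≤ i ≤ S`) the Rodrigues-type
formula satisfies `P_n^{(W)} = 𝒜₁ 𝒜₂ ⋯ 𝒜ₘ (xⁱ I)`; as a consequence each `P_n^{(W)}`
is a matrix-valued polynomial in `x`. Here `W` is an integrating factor: an
invertible-matrix-valued analytic solution of `W' = W B` on a simply connected
domain `U` avoiding the singularities. -/
theorem stmt_8 (N S : ℕ) (hN : 1 ≤ N)
    (p : Fin (S + 2) → ℂ) (hp : Function.Injective p)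
    (B : Fin (S + 2) → Matrix (Fin N) (Fin N) ℂ)
    (U : Set ℂ) (hU : IsOpen U) (hUc : IsPreconnected U) (hUne : U.Nonempty)
    (hUsc : SimplyConnectedSpace U) (hUp : ∀ j, p j ∉ U)
    (W : ℂ → Matrix (Fin N) (Fin N) ℂ)
    (hWa : AnalyticOnNhd ℂ W U)
    (hWd : ∀ x ∈ U, HasDerivAt W (W x * (∑ j, (x - p j)⁻¹ • B j)) x)
    (hWi : ∀ x ∈ U, IsUnit (W x))
    (n : ℕ) (hn : S + 1 ≤ n) :
    (∀ x ∈ U,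
      RodriguesP N S p W n x =
        (((List.range (n / (S + 1))).map fun k => k + 1).foldr (AOp N S p B)
          (fun t => (t ^ (n % (S + 1)) : ℂ) • (1 : Matrix (Fin N) (Fin N) ℂ))) x)
    ∧ ∃ (dg : ℕ) (c : ℕ → Matrix (Fin N) (Fin N) ℂ),
        ∀ x ∈ U, RodriguesP N S p W n x = ∑ k ∈ Finset.range (dg + 1), x ^ k • c k := by
  set m := n / (S + 1) with hm'
  set i := n % (S + 1) with hi'
  set V : Set ℂ := {x : ℂ | ∀ j, x ≠ p j} with hV
  have hVopen : IsOpen V := isOpen_compl_p p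
  have hUV : ∀ x ∈ U, x ∈ V := fun x hx j hj => hUp j (hj ▸ hx)
  have key : ∀ k, k ≤ m → ∀ x ∈ U,
      iteratedDeriv k (fun t => (t ^ i * (∏ j, (t - p j)) ^ m) • W t) x
        = (∏ j, (x - p j)) ^ (m - k) • (W x * Gfun N S p B i m k x) := by
    intro k
    induction k with
    | zero =>
      intro _ x hx
      rw [iteratedDeriv_zero, Nat.sub_zero, Gfun_zero]
      have h1 : W x * ((x : ℂ) ^ i • (1 : Matrix (Fin N) (Fin N) ℂ)) = (x:ℂ) ^ i • W x := by
        rw [Matrix.mul_smul, mul_one]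
      rw [h1, smul_smul, mul_comm]
    | succ k ih =>
      intro hk1 x hx
      have hkm : k < m := hk1
      rw [iteratedDeriv_succ]
      have hev : iteratedDeriv k (fun t => (t ^ i * (∏ j, (t - p j)) ^ m) • W t)
          =ᶠ[nhds x] (fun y => (∏ j, (y - p j)) ^ (m - k) • (W y * Gfun N S p B i m k y)) :=
        Filter.eventuallyEq_of_mem (hU.mem_nhds hx) (fun y hy => ih (Nat.le_of_lt hkm) y hy)
      rw [hev.deriv_eq]
      have hme : m - k = (m - (k + 1)) + 1 := by omega
      set e := m - (k + 1) with he
      have hGd : DifferentiableAt ℂ (Gfun N S p B i m k) x :=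
        (Gfun_isPF N S p B i m k).differentiableAt hVopen (hUV x hx)
      have hQp := (hasDerivAt_Q p x).fun_pow (e + 1)
      simp only [Nat.add_sub_cancel] at hQp
      have hWG := (hWd x hx).fun_mul (by have hGd' : HasDerivAt (Gfun N S p B i m k) (deriv (Gfun N S p B i m k) x) x := hGd.hasDerivAt; exact hGd')
      have hfull := hQp.fun_smul hWG
      have hd := hfull.deriv
      beta_reduce at hd
      rw [hme, hd, Gfun_succ N S p B i m k hkm, hme, AOp]
      beta_reduce
      rw [derivQ p x]
      simp only [Matrix.mul_add, Matrix.mul_smul, ← Matrix.mul_assoc]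
      match_scalars <;> ring
  have main : ∀ x ∈ U, RodriguesP N S p W n x = Gfun N S p B i m m x := by
    intro x hx
    have h := key m le_rfl x hx
    rw [Nat.sub_self, pow_zero, one_smul] at h
    unfold RodriguesP
    rw [← hm', ← hi', h, ← Matrix.mul_assoc,
      Matrix.nonsing_inv_mul _ ((Matrix.isUnit_iff_isUnit_det _).mp (hWi x hx)),
      Matrix.one_mul]
  have hGm : Gfun N S p B i m m
      = ((List.range m).map fun k => k + 1).foldr (AOp N S p B)
          (fun t => (t ^ i : ℂ) • (1 : Matrix (Fin N) (Fin N) ℂ)) := by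
    unfold Gfun
    congr 1
    exact List.map_congr_left fun j _ => by omega
  constructor
  · intro x hx
    rw [main x hx, hGm]
  · obtain ⟨d, c, hc⟩ := Gfun_isPF N S p B i m m
    refine ⟨d, fun k => if k < d then c k else 0, fun x hx => ?_⟩
    rw [main x hx, hc x (hUV x hx), pf_pad c (Nat.le_succ d) x]
end

section
/- Assume condition (INV). Then for every polynomial g ∈ ℂ^N[x] there exist a unique polynomial φ ∈ ℂ^N[x] of degree at most S and a unique polynomial y ∈ ℂ^N[x] such that y'(x) + B(x) y(x) = Q(x)^{−1} [g(x) − φ(x)]; moreover, if deg g ≥ S+1 then deg y = deg g − (S+1), and if deg g ≤ S then y ≡ 0 and φ = g. -/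
open Matrix Set Polynomial Finset

namespace Stmt11Aux

variable {N S : ℕ}

noncomputable def Qp (S : ℕ) (p : Fin (S + 2) → ℂ) : Polynomial ℂ :=
  ∏ j, (X - C (p j))

noncomputable def Ap (N S : ℕ) (p : Fin (S + 2) → ℂ)
    (B : Fin (S + 2) → Matrix (Fin N) (Fin N) ℂ) :
    Matrix (Fin N) (Fin N) (Polynomial ℂ) :=
  ∑ j, (∏ k ∈ Finset.univ.erase j, (X - C (p k))) • (B j).map C

noncomputable def Lop (N S : ℕ) (p : Fin (S + 2) → ℂ)
    (B : Fin (S + 2) → Matrix (Fin N) (Fin N) ℂ)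
    (y : Fin N → Polynomial ℂ) : Fin N → Polynomial ℂ :=
  fun i => Qp S p * derivative (y i) + ∑ l, Ap N S p B i l * y l

lemma Qp_monic (p : Fin (S + 2) → ℂ) : (Qp S p).Monic :=
  monic_prod_of_monic _ _ fun j _ => monic_X_sub_C _

lemma Qp_natDegree (p : Fin (S + 2) → ℂ) : (Qp S p).natDegree = S + 2 := by
  rw [Qp, natDegree_prod_of_monic _ _ fun j _ => monic_X_sub_C (p j)]
  simp [natDegree_X_sub_C]

lemma prodErase_monic (p : Fin (S + 2) → ℂ) (j : Fin (S + 2)) :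
    (∏ k ∈ Finset.univ.erase j, (X - C (p k))).Monic :=
  monic_prod_of_monic _ _ fun k _ => monic_X_sub_C _

lemma prodErase_natDegree (p : Fin (S + 2) → ℂ) (j : Fin (S + 2)) :
    (∏ k ∈ Finset.univ.erase j, (X - C (p k))).natDegree = S + 1 := by
  rw [natDegree_prod_of_monic _ _ fun k _ => monic_X_sub_C (p k)]
  simp [natDegree_X_sub_C, Finset.card_erase_of_mem]

lemma Ap_entry (p : Fin (S + 2) → ℂ) (B : Fin (S + 2) → Matrix (Fin N) (Fin N) ℂ)
    (i l : Fin N) :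
    Ap N S p B i l = ∑ j, (∏ k ∈ Finset.univ.erase j, (X - C (p k))) * C (B j i l) := by
  simp [Ap, Matrix.sum_apply, smul_eq_mul, Matrix.map_apply]

lemma Ap_natDegree_le (p : Fin (S + 2) → ℂ) (B : Fin (S + 2) → Matrix (Fin N) (Fin N) ℂ)
    (i l : Fin N) : (Ap N S p B i l).natDegree ≤ S + 1 := by
  rw [Ap_entry]
  refine natDegree_sum_le_of_forall_le _ _ fun j _ => ?_
  refine natDegree_mul_le.trans ?_
  simp [prodErase_natDegree, natDegree_C]

lemma Ap_coeff_top (p : Fin (S + 2) → ℂ) (B : Fin (S + 2) → Matrix (Fin N) (Fin N) ℂ)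
    (i l : Fin N) : (Ap N S p B i l).coeff (S + 1) = (∑ j, B j) i l := by
  rw [Ap_entry, finset_sum_coeff]
  rw [Matrix.sum_apply]
  refine Finset.sum_congr rfl fun j _ => ?_
  rw [coeff_mul_C]
  have : (∏ k ∈ Finset.univ.erase j, (X - C (p k))).coeff (S + 1) = 1 := by
    have h := (prodErase_monic p j).leadingCoeff
    rwa [leadingCoeff, prodErase_natDegree] at h
  rw [this, one_mul]

variable (p : Fin (S + 2) → ℂ) (B : Fin (S + 2) → Matrix (Fin N) (Fin N) ℂ)

lemma Lop_natDegree_le (d : ℕ) (y : Fin N → Polynomial ℂ)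
    (hy : ∀ i, (y i).natDegree ≤ d) (i : Fin N) :
    (Lop N S p B y i).natDegree ≤ d + S + 1 := by
  refine natDegree_add_le_of_degree_le ?_ ?_
  · rcases d with _ | e
    · have h0 : y i = C ((y i).coeff 0) := eq_C_of_natDegree_le_zero (hy i)
      rw [h0]; simp
    · refine natDegree_mul_le.trans ?_
      have h2 : (derivative (y i)).natDegree ≤ e := by
        have := (natDegree_derivative_le (y i)).trans (Nat.sub_le_sub_right (hy i) 1)
        simpa using this
      rw [Qp_natDegree]
      omega
  · refine (natDegree_sum_le_of_forall_le _ _ fun l _ => ?_)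
    refine natDegree_mul_le.trans ?_
    have := Ap_natDegree_le p B i l
    have := hy l
    omega

lemma Lop_coeff_top (d : ℕ) (y : Fin N → Polynomial ℂ)
    (hy : ∀ i, (y i).natDegree ≤ d) (i : Fin N) :
    (Lop N S p B y i).coeff (d + S + 1)
      = (d : ℂ) * (y i).coeff d + ∑ l, (∑ j, B j) i l * (y l).coeff d := by
  rw [Lop, coeff_add]
  congr 1
  · rcases d with _ | e
    · have h0 : y i = C ((y i).coeff 0) := eq_C_of_natDegree_le_zero (hy i)
      rw [h0]; simp
    · have h1 : (Qp S p).natDegree ≤ S + 2 := le_of_eq (Qp_natDegree p)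
      have h2 : (derivative (y i)).natDegree ≤ e := by
        have := (natDegree_derivative_le (y i)).trans (Nat.sub_le_sub_right (hy i) 1)
        simpa using this
      have h3 : e + 1 + S + 1 = S + 2 + e := by ring
      rw [h3, coeff_mul_add_eq_of_natDegree_le h1 h2, coeff_derivative]
      have h4 : (Qp S p).coeff (S + 2) = 1 := by
        have := (Qp_monic (S := S) p).coeff_natDegree
        rwa [Qp_natDegree] at this
      rw [h4, one_mul]
      push_cast
      ring
  · rw [finset_sum_coeff]
    refine Finset.sum_congr rfl fun l _ => ?_
    have h3 : d + S + 1 = (S + 1) + d := by ring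
    rw [h3, coeff_mul_add_eq_of_natDegree_le (Ap_natDegree_le p B i l) (hy l), Ap_coeff_top]

lemma Lop_add (y z : Fin N → Polynomial ℂ) :
    Lop N S p B (y + z) = Lop N S p B y + Lop N S p B z := by
  funext i
  simp only [Lop, Pi.add_apply, derivative_add, mul_add, add_mul, Finset.sum_add_distrib]
  ring

lemma Lop_zero : Lop N S p B 0 = 0 := by
  funext i; simp [Lop]

lemma Lop_sub (y z : Fin N → Polynomial ℂ) :
    Lop N S p B (y - z) = Lop N S p B y - Lop N S p B z := by
  funext i
  simp only [Lop, Pi.sub_apply, derivative_sub, mul_sub, sub_mul, Finset.sum_sub_distrib]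
  ring

lemma Lop_eval (x : ℂ) (y : Fin N → Polynomial ℂ) (i : Fin N) :
    eval x (Lop N S p B y i)
      = (∏ j, (x - p j)) * eval x (derivative (y i))
        + ∑ l, (∑ j, (∏ k ∈ Finset.univ.erase j, (x - p k)) * B j i l) * eval x (y l) := by
  simp [Lop, Qp, Ap_entry, eval_prod, eval_finset_sum, Finset.sum_mul]

lemma mulVec_apply_eq (M : Matrix (Fin N) (Fin N) ℂ) (d : ℕ) (c : Fin N → ℂ) (i : Fin N) :
    (((d : ℂ) • (1 : Matrix (Fin N) (Fin N) ℂ) + M) *ᵥ c) i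
      = (d : ℂ) * c i + ∑ l, M i l * c l := by
  rw [Matrix.add_mulVec, Matrix.smul_mulVec, Matrix.one_mulVec]
  simp [Matrix.mulVec, dotProduct]

lemma exists_sol
    (hinv : ∀ k : ℕ, IsUnit ((k : ℂ) • (1 : Matrix (Fin N) (Fin N) ℂ) + ∑ j, B j)) :
    ∀ n (g : Fin N → Polynomial ℂ), (∀ i, (g i).natDegree ≤ n) →
      ∃ φ y : Fin N → Polynomial ℂ,
        (∀ i, (φ i).natDegree ≤ S) ∧ ∀ i, φ i + Lop N S p B y i = g i := by
  intro n
  induction n using Nat.strong_induction_on with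
  | _ n ih =>
    intro g hg
    by_cases hn : n ≤ S
    · refine ⟨g, 0, fun i => (hg i).trans hn, fun i => ?_⟩
      rw [Lop_zero, Pi.zero_apply, add_zero]
    · push_neg at hn
      set m := n - (S + 1) with hm
      have hmn : m + S + 1 = n := by omega
      obtain ⟨u, hu⟩ := hinv m
      set c : Fin N → ℂ := (↑u⁻¹ : Matrix (Fin N) (Fin N) ℂ) *ᵥ (fun i => (g i).coeff n)
        with hc
      have hMc : (((m : ℂ) • (1 : Matrix (Fin N) (Fin N) ℂ) + ∑ j, B j) *ᵥ c)
          = fun i => (g i).coeff n := by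
        rw [hc, Matrix.mulVec_mulVec, ← hu, Units.mul_inv, Matrix.one_mulVec]
      set y₁ : Fin N → Polynomial ℂ := fun i => Polynomial.monomial m (c i) with hy₁def
      have hy₁ : ∀ i, (y₁ i).natDegree ≤ m := fun i => natDegree_monomial_le _
      have hcoef : ∀ i, (Lop N S p B y₁ i).coeff n = (g i).coeff n := by
        intro i
        have h5 := Lop_coeff_top p B m y₁ hy₁ i
        rw [hmn] at h5
        rw [h5]
        simp only [hy₁def, coeff_monomial, if_true]
        rw [← mulVec_apply_eq]
        exact congrFun hMc i
      have hdeg : ∀ i, (Lop N S p B y₁ i).natDegree ≤ n := by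
        intro i
        rw [← hmn]; exact Lop_natDegree_le p B m y₁ hy₁ i
      set g' : Fin N → Polynomial ℂ := fun i => g i - Lop N S p B y₁ i with hg'def
      have hg' : ∀ i, (g' i).natDegree ≤ n - 1 := by
        intro i
        rw [natDegree_le_iff_coeff_eq_zero]
        intro k hk
        rcases eq_or_lt_of_le (show n ≤ k by omega) with h | h
        · simp only [hg'def, coeff_sub, ← h, hcoef i, sub_self]
        · simp only [hg'def, coeff_sub,
            coeff_eq_zero_of_natDegree_lt ((hg i).trans_lt h),
            coeff_eq_zero_of_natDegree_lt ((hdeg i).trans_lt h), sub_self]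
      obtain ⟨φ, y₂, hφ, heq2⟩ := ih (n - 1) (by omega) g' hg'
      refine ⟨φ, y₂ + y₁, hφ, fun i => ?_⟩
      rw [Lop_add, Pi.add_apply, ← add_assoc, heq2 i, hg'def, sub_add_cancel]

lemma exists_top (y : Fin N → Polynomial ℂ) (hy : ∃ i, y i ≠ 0) :
    ∃ i, y i ≠ 0 ∧ (y i).natDegree = Finset.univ.sup fun i => (y i).natDegree := by
  obtain ⟨i0, hi0⟩ := hy
  obtain ⟨i1, -, h1⟩ := Finset.exists_mem_eq_sup Finset.univ
    ⟨i0, Finset.mem_univ i0⟩ (fun i => (y i).natDegree)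
  by_cases h : y i1 = 0
  · refine ⟨i0, hi0, le_antisymm
      (Finset.le_sup (f := fun i => (y i).natDegree) (Finset.mem_univ i0)) ?_⟩
    rw [h1, h, natDegree_zero]
    exact Nat.zero_le _
  · exact ⟨i1, h, h1.symm⟩

lemma Lop_top_ne
    (hinv : ∀ k : ℕ, IsUnit ((k : ℂ) • (1 : Matrix (Fin N) (Fin N) ℂ) + ∑ j, B j))
    (y : Fin N → Polynomial ℂ) (hy : ∃ i, y i ≠ 0) :
    ∃ i, (Lop N S p B y i).coeff
      ((Finset.univ.sup fun i => (y i).natDegree) + S + 1) ≠ 0 := by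
  set d := Finset.univ.sup fun i => (y i).natDegree with hd
  have hyd : ∀ i, (y i).natDegree ≤ d :=
    fun i => Finset.le_sup (f := fun i => (y i).natDegree) (Finset.mem_univ i)
  obtain ⟨i1, h1, h2⟩ := exists_top y hy
  set c : Fin N → ℂ := fun l => (y l).coeff d with hcdef
  have hc : c ≠ 0 := by
    intro h
    have h3 : c i1 = 0 := congrFun h i1
    rw [hcdef] at h3
    simp only [hd, ← h2] at h3
    rw [coeff_natDegree] at h3
    exact (leadingCoeff_ne_zero.mpr h1) h3
  by_contra hall
  push_neg at hall
  have hvec : (((d : ℂ) • (1 : Matrix (Fin N) (Fin N) ℂ) + ∑ j, B j)) *ᵥ c = 0 := by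
    funext i
    rw [mulVec_apply_eq, Pi.zero_apply]
    have := Lop_coeff_top p B d y hyd i
    rw [← this]
    exact hall i
  obtain ⟨u, hu⟩ := hinv d
  have h0 : (↑u⁻¹ : Matrix (Fin N) (Fin N) ℂ) *ᵥ
      ((((d : ℂ) • (1 : Matrix (Fin N) (Fin N) ℂ) + ∑ j, B j)) *ᵥ c) = c := by
    rw [Matrix.mulVec_mulVec, ← hu, Units.inv_mul, Matrix.one_mulVec]
  rw [hvec, Matrix.mulVec_zero] at h0
  exact hc h0.symm

lemma main_deg (hN : 1 ≤ N)
    (hinv : ∀ k : ℕ, IsUnit ((k : ℂ) • (1 : Matrix (Fin N) (Fin N) ℂ) + ∑ j, B j))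
    (g φ y : Fin N → Polynomial ℂ) (hφ : ∀ i, (φ i).natDegree ≤ S)
    (heq : ∀ i, φ i + Lop N S p B y i = g i) :
    (S + 1 ≤ Finset.univ.sup (fun i => (g i).natDegree) →
        Finset.univ.sup (fun i => (y i).natDegree)
          = Finset.univ.sup (fun i => (g i).natDegree) - (S + 1))
      ∧ (Finset.univ.sup (fun i => (g i).natDegree) ≤ S →
          (∀ i, y i = 0) ∧ φ = g) := by
  have heq' : ∀ i, Lop N S p B y i = g i - φ i := by
    intro i; rw [← heq i]; ring
  constructor
  · intro hS
    have hy0 : ∃ i, y i ≠ 0 := by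
      by_contra h
      push_neg at h
      have hyz : y = 0 := funext h
      have : ∀ i, g i = φ i := by
        intro i; rw [← heq i, hyz, Lop_zero, Pi.zero_apply, add_zero]
      have h9 : Finset.univ.sup (fun i => (g i).natDegree) ≤ S :=
        Finset.sup_le fun i _ => by rw [this i]; exact hφ i
      omega
    obtain ⟨i, hi⟩ := Lop_top_ne p B hinv y hy0
    rw [heq' i, coeff_sub,
      coeff_eq_zero_of_natDegree_lt ((hφ i).trans_lt (by omega)), sub_zero] at hi
    have hup : (Finset.univ.sup fun i => (y i).natDegree) + S + 1
        ≤ Finset.univ.sup fun i => (g i).natDegree := by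
      have := le_natDegree_of_ne_zero hi
      exact this.trans (Finset.le_sup (f := fun i => (g i).natDegree) (Finset.mem_univ i))
    have hg0 : ∃ i, g i ≠ 0 := by
      by_contra h
      push_neg at h
      have h9 : Finset.univ.sup (fun i => (g i).natDegree) = 0 := by simp [h]
      omega
    obtain ⟨i0, hgi0, hgd⟩ := exists_top g hg0
    have hgc : (g i0).coeff (Finset.univ.sup fun i => (g i).natDegree) ≠ 0 := by
      rw [← hgd, coeff_natDegree]
      exact leadingCoeff_ne_zero.mpr hgi0
    have hlc : (Lop N S p B y i0).coeff (Finset.univ.sup fun i => (g i).natDegree) ≠ 0 := by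
      rw [heq' i0, coeff_sub,
        coeff_eq_zero_of_natDegree_lt ((hφ i0).trans_lt (by omega)), sub_zero]
      exact hgc
    have hdown : (Finset.univ.sup fun i => (g i).natDegree)
        ≤ (Finset.univ.sup fun i => (y i).natDegree) + S + 1 := by
      have h1 := le_natDegree_of_ne_zero hlc
      have h2 := Lop_natDegree_le p B (Finset.univ.sup fun i => (y i).natDegree) y
        (fun i => Finset.le_sup (f := fun i => (y i).natDegree) (Finset.mem_univ i)) i0
      omega
    omega
  · intro hS
    have hyz : ∀ i, y i = 0 := by
      by_contra h
      push_neg at h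
      obtain ⟨i, hi⟩ := Lop_top_ne p B hinv y h
      apply hi
      rw [heq' i, coeff_sub]
      have hg1 : (g i).natDegree ≤ S :=
        le_trans (Finset.le_sup (f := fun i => (g i).natDegree) (Finset.mem_univ i)) hS
      rw [coeff_eq_zero_of_natDegree_lt (hg1.trans_lt (by omega)),
        coeff_eq_zero_of_natDegree_lt ((hφ i).trans_lt (by omega)), sub_self]
    have hy0' : y = 0 := funext hyz
    refine ⟨hyz, funext fun i => ?_⟩
    rw [← heq i, hy0', Lop_zero, Pi.zero_apply, add_zero]

lemma pointwise_iff (g φ y : Fin N → Polynomial ℂ) (x : ℂ) (hx : x ∉ Set.range p) :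
    ((fun i => (y i).derivative.eval x)
        + (∑ j, (x - p j)⁻¹ • B j) *ᵥ (fun i => (y i).eval x)
      = (∏ j, (x - p j))⁻¹ •
          ((fun i => (g i).eval x) - fun i => (φ i).eval x))
    ↔ ∀ i, eval x (φ i + Lop N S p B y i) = eval x (g i) := by
  have hne : ∀ j, x - p j ≠ 0 := by
    intro j h
    exact hx ⟨j, (sub_eq_zero.mp h).symm⟩
  have hqx : (∏ j, (x - p j)) ≠ 0 :=
    Finset.prod_ne_zero_iff.mpr fun j _ => hne j
  have hjq : ∀ j : Fin (S + 2), (∏ j, (x - p j)) * (x - p j)⁻¹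
      = ∏ k ∈ Finset.univ.erase j, (x - p k) := by
    intro j
    rw [← Finset.mul_prod_erase Finset.univ _ (Finset.mem_univ j),
      mul_comm (x - p j), mul_assoc, mul_inv_cancel₀ (hne j), mul_one]
  rw [funext_iff]
  refine forall_congr' fun i => ?_
  rw [eval_add, Lop_eval]
  simp only [Pi.add_apply, Matrix.mulVec, dotProduct, Matrix.sum_apply,
    Matrix.smul_apply, smul_eq_mul, Pi.smul_apply, Pi.sub_apply]
  rw [← mul_right_inj' hqx]
  have e1 : (∏ j, (x - p j)) * ((y i).derivative.eval x
        + ∑ l, (∑ j, (x - p j)⁻¹ * B j i l) * (y l).eval x)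
      = (∏ j, (x - p j)) * eval x (derivative (y i))
        + ∑ l, (∑ j, (∏ k ∈ Finset.univ.erase j, (x - p k)) * B j i l)
            * eval x (y l) := by
    rw [mul_add]
    congr 1
    rw [Finset.mul_sum]
    refine Finset.sum_congr rfl fun l _ => ?_
    rw [← mul_assoc, Finset.mul_sum]
    congr 1
    refine Finset.sum_congr rfl fun j _ => ?_
    rw [← mul_assoc, hjq j]
  have e2 : (∏ j, (x - p j)) * ((∏ j, (x - p j))⁻¹
        * ((g i).eval x - (φ i).eval x))
      = (g i).eval x - (φ i).eval x := by
    rw [← mul_assoc, mul_inv_cancel₀ hqx, one_mul]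
  rw [e1, e2, eq_sub_iff_add_eq, add_comm ((φ i).eval x)]

lemma bridge (g φ y : Fin N → Polynomial ℂ) :
    (∀ x : ℂ, x ∉ Set.range p →
      (fun i => (y i).derivative.eval x)
          + (∑ j, (x - p j)⁻¹ • B j) *ᵥ (fun i => (y i).eval x)
        = (∏ j, (x - p j))⁻¹ •
            ((fun i => (g i).eval x) - fun i => (φ i).eval x))
    ↔ ∀ i, φ i + Lop N S p B y i = g i := by
  constructor
  · intro h i
    apply eq_of_infinite_eval_eq
    refine Set.Infinite.mono ?_ ((Set.finite_range p).infinite_compl)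
    intro x hx
    exact (pointwise_iff p B g φ y x hx).mp (h x hx) i
  · intro h x hx
    exact (pointwise_iff p B g φ y x hx).mpr fun i => by rw [h i]

end Stmt11Aux


open Stmt11Aux in
/-- §4.3.2 of the paper: under condition (INV), for every polynomial `g ∈ ℂᴺ[x]`
there is a unique pair `(φ, y)` of polynomials with `deg φ ≤ S` such that
`y' + B(x) y = Q(x)⁻¹ (g(x) − φ(x))`; moreover for any such pair, if
`deg g ≥ S+1` then `deg y = deg g − (S+1)`, and if `deg g ≤ S` then `y ≡ 0` and `φ = g`. -/
theorem stmt_11 (N S : ℕ) (hN : 1 ≤ N)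
    (p : Fin (S + 2) → ℂ) (hp : Function.Injective p)
    (B : Fin (S + 2) → Matrix (Fin N) (Fin N) ℂ)
    (hinv : ∀ k : ℕ,
      (∀ j, IsUnit ((k : ℂ) • (1 : Matrix (Fin N) (Fin N) ℂ) + B j)) ∧
        IsUnit ((k : ℂ) • (1 : Matrix (Fin N) (Fin N) ℂ) + ∑ j, B j))
    (g : Fin N → Polynomial ℂ) :
    (∃! φy : (Fin N → Polynomial ℂ) × (Fin N → Polynomial ℂ),
      (∀ i, (φy.1 i).degree ≤ (S : ℕ)) ∧
        ∀ x : ℂ, x ∉ Set.range p →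
          (fun i => (φy.2 i).derivative.eval x)
              + (∑ j, (x - p j)⁻¹ • B j) *ᵥ (fun i => (φy.2 i).eval x)
            = (∏ j, (x - p j))⁻¹ •
                ((fun i => (g i).eval x) - fun i => (φy.1 i).eval x))
    ∧ ∀ φ y : Fin N → Polynomial ℂ,
        (∀ i, (φ i).degree ≤ (S : ℕ)) →
        (∀ x : ℂ, x ∉ Set.range p →
          (fun i => (y i).derivative.eval x)
              + (∑ j, (x - p j)⁻¹ • B j) *ᵥ (fun i => (y i).eval x)
            = (∏ j, (x - p j))⁻¹ •
                ((fun i => (g i).eval x) - fun i => (φ i).eval x)) →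
        ((S + 1 ≤ Finset.univ.sup (fun i => (g i).natDegree) →
            Finset.univ.sup (fun i => (y i).natDegree)
              = Finset.univ.sup (fun i => (g i).natDegree) - (S + 1))
          ∧ (Finset.univ.sup (fun i => (g i).natDegree) ≤ S →
              (∀ i, y i = 0) ∧ φ = g)) := by
  have hinv' : ∀ k : ℕ,
      IsUnit ((k : ℂ) • (1 : Matrix (Fin N) (Fin N) ℂ) + ∑ j, B j) :=
    fun k => (hinv k).2
  constructor
  · obtain ⟨φ, y, hφ, heq⟩ := exists_sol p B hinv'
      (Finset.univ.sup fun i => (g i).natDegree) g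
      (fun i => Finset.le_sup (f := fun i => (g i).natDegree) (Finset.mem_univ i))
    refine ⟨(φ, y), ⟨fun i => Polynomial.natDegree_le_iff_degree_le.mp (hφ i),
      (bridge p B g φ y).mpr heq⟩, ?_⟩
    rintro ⟨φ', y'⟩ ⟨hφ', hpt'⟩
    have hφ'n : ∀ i, (φ' i).natDegree ≤ S :=
      fun i => Polynomial.natDegree_le_iff_degree_le.mpr (hφ' i)
    have heq' : ∀ i, φ' i + Lop N S p B y' i = g i := (bridge p B g φ' y').mp hpt'
    have hz : ∀ i, φ' i + Lop N S p B (y' - y) i = φ i := by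
      intro i
      rw [Lop_sub, Pi.sub_apply]
      linear_combination heq' i - heq i
    obtain ⟨hyz, hφeq⟩ := (main_deg p B hN hinv' φ φ' (y' - y) hφ'n hz).2
      (Finset.sup_le fun i _ => hφ i)
    have hy'y : y' = y := by
      funext i
      have h := hyz i
      rw [Pi.sub_apply, sub_eq_zero] at h
      exact h
    rw [Prod.ext_iff]
    exact ⟨hφeq, hy'y⟩
  · intro φ y hφ hpt
    exact main_deg p B hN hinv' g φ y
      (fun i => Polynomial.natDegree_le_iff_degree_le.mpr (hφ i))
      ((bridge p B g φ y).mp hpt)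
end

section
/- Let W̃ = Q^{−1} W, which is an integrating factor for B̃(x) = B(x) − (Q'(x)/Q(x)) I (a Fuchsian matrix with residues B̃_j = B_j − I and B̃_∞ = B_∞ − (S+2)I). Then for every n ∈ ℕ, writing n = (S+1)m + i with 0 ≤ i ≤ S, one has P_{n+S+1}^{(W̃)}(x) = Q(x) W(x)^{−1} (d/dx)^{m+1} [ x^i Q(x)^m W(x) ], and consequently for every constant vector c ∈ ℂ^N the function y(x) = P_n^{(W)}(x) c is a solution of y'(x) + B(x) y(x) = Q(x)^{−1} P_{n+S+1}^{(W̃)}(x) c. -/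
open Matrix Set

attribute [local instance] Matrix.linftyOpNormedAddCommGroup Matrix.linftyOpNormedSpace
  Matrix.linftyOpNormedRing Matrix.linftyOpNormedAlgebra

section Aux

variable {S : ℕ} (p : Fin (S + 2) → ℂ)

lemma auxQ_analytic : AnalyticOnNhd ℂ (fun t : ℂ => ∏ j, (t - p j)) univ := by
  apply Finset.analyticOnNhd_fun_prod
  intro j _
  exact analyticOnNhd_id.sub analyticOnNhd_const

lemma auxQ_diff : Differentiable ℂ (fun t : ℂ => ∏ j, (t - p j)) :=
  fun x => ((auxQ_analytic p) x (mem_univ x)).differentiableAt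

lemma aux_scalar_analytic (i m : ℕ) :
    AnalyticOnNhd ℂ (fun t : ℂ => t ^ i * (∏ j, (t - p j)) ^ m) univ :=
  (analyticOnNhd_id.pow i).mul ((auxQ_analytic p).pow m)

end Aux

/-- §4.3.2 of the paper: `W̃ = Q⁻¹ W` is an integrating factor for
`B̃(x) = B(x) − (Q'(x)/Q(x)) I`; one has
`P_{n+S+1}^{(W̃)}(x) = Q(x) W(x)⁻¹ (d/dx)^{m+1} [ xⁱ Q(x)^m W(x) ]` (where
`n = (S+1)m + i`, `0 ≤ i ≤ S`), and consequently for every constant vector `c`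
the function `y(x) = P_n^{(W)}(x) c` solves
`y' + B(x) y = Q(x)⁻¹ P_{n+S+1}^{(W̃)}(x) c`. -/
theorem stmt_12 (N S : ℕ) (hN : 1 ≤ N)
    (p : Fin (S + 2) → ℂ) (hp : Function.Injective p)
    (B : Fin (S + 2) → Matrix (Fin N) (Fin N) ℂ)
    (U : Set ℂ) (hU : IsOpen U) (hUc : IsPreconnected U) (hUne : U.Nonempty)
    (hUsc : SimplyConnectedSpace U) (hUp : ∀ j, p j ∉ U)
    (W : ℂ → Matrix (Fin N) (Fin N) ℂ)
    (hWa : AnalyticOnNhd ℂ W U)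
    (hWd : ∀ x ∈ U, HasDerivAt W (W x * (∑ j, (x - p j)⁻¹ • B j)) x)
    (hWi : ∀ x ∈ U, IsUnit (W x)) :
    (∀ x ∈ U,
      HasDerivAt (fun t => (∏ j, (t - p j))⁻¹ • W t)
        (((∏ j, (x - p j))⁻¹ • W x) *
          ((∑ j, (x - p j)⁻¹ • B j)
            - (deriv (fun t => ∏ j, (t - p j)) x / ∏ j, (x - p j)) •
                (1 : Matrix (Fin N) (Fin N) ℂ))) x)
    ∧ (∀ n : ℕ, ∀ x ∈ U,
        RodriguesP N S p (fun t => (∏ j, (t - p j))⁻¹ • W t) (n + S + 1) x =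
          (∏ j, (x - p j)) •
            ((W x)⁻¹ *
              iteratedDeriv (n / (S + 1) + 1)
                (fun t => (t ^ (n % (S + 1)) * (∏ j, (t - p j)) ^ (n / (S + 1))) • W t) x))
    ∧ ∀ (n : ℕ) (c : Fin N → ℂ), ∀ x ∈ U,
        HasDerivAt (fun t => RodriguesP N S p W n t *ᵥ c)
          ((∏ j, (x - p j))⁻¹ •
              (RodriguesP N S p (fun t => (∏ j, (t - p j))⁻¹ • W t) (n + S + 1) x *ᵥ c)
            - (∑ j, (x - p j)⁻¹ • B j) *ᵥ (RodriguesP N S p W n x *ᵥ c)) x := by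
  have hQne : ∀ x ∈ U, (∏ j, (x - p j)) ≠ 0 := by
    intro x hx
    rw [Finset.prod_ne_zero_iff]
    intro j _ h
    exact hUp j (sub_eq_zero.mp h ▸ hx)
  have hQd : ∀ x : ℂ, HasDerivAt (fun t => ∏ j, (t - p j))
      (deriv (fun t => ∏ j, (t - p j)) x) x := fun x => (auxQ_diff p x).hasDerivAt
  have hdetW : ∀ x ∈ U, IsUnit (W x).det := fun x hx =>
    (Matrix.isUnit_iff_isUnit_det _).mp (hWi x hx)
  have hWinv : ∀ x ∈ U, W x * (W x)⁻¹ = 1 := fun x hx => Matrix.mul_nonsing_inv _ (hdetW x hx)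
  have hWinv' : ∀ x ∈ U, (W x)⁻¹ * W x = 1 := fun x hx => Matrix.nonsing_inv_mul _ (hdetW x hx)
  have hdiv : ∀ n : ℕ, (n + S + 1) / (S + 1) = n / (S + 1) + 1 := by
    intro n
    have h : n + S + 1 = n + (S + 1) := by ring
    rw [h, Nat.add_div_right _ (Nat.succ_pos S)]
  have hmod : ∀ n : ℕ, (n + S + 1) % (S + 1) = n % (S + 1) := by
    intro n
    have h : n + S + 1 = n + (S + 1) := by ring
    rw [h, Nat.add_mod_right]
  -- Part 1
  have part1 : ∀ x ∈ U,
      HasDerivAt (fun t => (∏ j, (t - p j))⁻¹ • W t)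
        (((∏ j, (x - p j))⁻¹ • W x) *
          ((∑ j, (x - p j)⁻¹ • B j)
            - (deriv (fun t => ∏ j, (t - p j)) x / ∏ j, (x - p j)) •
                (1 : Matrix (Fin N) (Fin N) ℂ))) x := by
    intro x hx
    have hq := hQne x hx
    have h1 := ((hQd x).inv hq).smul (hWd x hx)
    refine h1.congr_deriv ?_
    symm
    rw [smul_mul_assoc, Matrix.mul_sub, Matrix.mul_smul, Matrix.mul_one, smul_sub, smul_smul]
    rw [sub_eq_add_neg, ← neg_smul]
    congr 2
    rw [pow_two]
    field_simp
  -- Part 2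
  have part2 : ∀ n : ℕ, ∀ x ∈ U,
      RodriguesP N S p (fun t => (∏ j, (t - p j))⁻¹ • W t) (n + S + 1) x =
        (∏ j, (x - p j)) •
          ((W x)⁻¹ *
            iteratedDeriv (n / (S + 1) + 1)
              (fun t => (t ^ (n % (S + 1)) * (∏ j, (t - p j)) ^ (n / (S + 1))) • W t) x) := by
    intro n x hx
    have hq := hQne x hx
    rw [RodriguesP, hdiv n, hmod n]
    have hinv : ((∏ j, (x - p j))⁻¹ • W x)⁻¹ = (∏ j, (x - p j)) • (W x)⁻¹ := by
      apply Matrix.inv_eq_right_inv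
      rw [Matrix.smul_mul, Matrix.mul_smul, hWinv x hx, smul_smul, inv_mul_cancel₀ hq, one_smul]
    have hopen : IsOpen {t : ℂ | (∏ j, (t - p j)) ≠ 0} :=
      isOpen_compl_singleton.preimage (auxQ_diff p).continuous
    have hev : (fun t => (t ^ (n % (S + 1)) * (∏ j, (t - p j)) ^ (n / (S + 1) + 1)) •
          ((∏ j, (t - p j))⁻¹ • W t))
        =ᶠ[nhds x] (fun t => (t ^ (n % (S + 1)) * (∏ j, (t - p j)) ^ (n / (S + 1))) • W t) := by
      filter_upwards [hopen.mem_nhds (hQne x hx)] with t ht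
      have hqt : (∏ j, (t - p j)) ≠ 0 := ht
      rw [smul_smul]
      congr 1
      field_simp
      ring
    rw [hinv, hev.iteratedDeriv_eq (n / (S + 1) + 1), smul_mul_assoc]
  refine ⟨part1, part2, ?_⟩
  -- Part 3
  intro n c x hx
  have hq := hQne x hx
  have hBs : (∑ j, (x - p j)⁻¹ • B j) = ∑ j, (x - p j)⁻¹ • B j := rfl
  -- analyticity of f and its iterated derivatives
  have hfa : AnalyticOnNhd ℂ
      (fun t => (t ^ (n % (S + 1)) * (∏ j, (t - p j)) ^ (n / (S + 1))) • W t) U :=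
    ((aux_scalar_analytic p _ _).mono (subset_univ U)).smul hWa
  have hFa : ∀ k, AnalyticOnNhd ℂ
      (iteratedDeriv k
        (fun t => (t ^ (n % (S + 1)) * (∏ j, (t - p j)) ^ (n / (S + 1))) • W t)) U := by
    intro k
    induction k with
    | zero => simpa [iteratedDeriv_zero] using hfa
    | succ k ih =>
      rw [iteratedDeriv_succ]
      exact ih.deriv_of_isOpen hU
  have hFd : HasDerivAt
      (iteratedDeriv (n / (S + 1))
        (fun t => (t ^ (n % (S + 1)) * (∏ j, (t - p j)) ^ (n / (S + 1))) • W t))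
      (iteratedDeriv (n / (S + 1) + 1)
        (fun t => (t ^ (n % (S + 1)) * (∏ j, (t - p j)) ^ (n / (S + 1))) • W t) x) x := by
    rw [iteratedDeriv_succ]
    exact ((hFa (n / (S + 1))) x hx).differentiableAt.hasDerivAt
  -- derivative of W⁻¹
  have hH : HasDerivAt (fun t => (W t)⁻¹)
      (-((∑ j, (x - p j)⁻¹ • B j) * (W x)⁻¹)) x := by
    have hu := hWi x hx
    have h1 : HasDerivAt (fun t => Ring.inverse (W t))
        ((-(ContinuousLinearMap.mulLeftRight ℂ _ (↑hu.unit⁻¹) (↑hu.unit⁻¹)))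
          (W x * (∑ j, (x - p j)⁻¹ • B j))) x :=
      (hasFDerivAt_ringInverse hu.unit).comp_hasDerivAt x (hWd x hx)
    have heq : (fun t => (W t)⁻¹) =ᶠ[nhds x] (fun t => Ring.inverse (W t)) := by
      filter_upwards [hU.mem_nhds hx] with t _
      exact Matrix.nonsing_inv_eq_ringInverse (W t)
    have h2 := h1.congr_of_eventuallyEq heq
    refine h2.congr_deriv ?_
    symm
    simp only [ContinuousLinearMap.neg_apply, ContinuousLinearMap.mulLeftRight_apply]
    rw [Matrix.coe_units_inv, hu.unit_spec]
    rw [← Matrix.mul_assoc ((W x)⁻¹) (W x) _, hWinv' x hx, Matrix.one_mul]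
  have hG : HasDerivAt (fun t => (W t)⁻¹ *
      iteratedDeriv (n / (S + 1))
        (fun t => (t ^ (n % (S + 1)) * (∏ j, (t - p j)) ^ (n / (S + 1))) • W t) t)
      (-((∑ j, (x - p j)⁻¹ • B j) * (W x)⁻¹) *
          iteratedDeriv (n / (S + 1))
            (fun t => (t ^ (n % (S + 1)) * (∏ j, (t - p j)) ^ (n / (S + 1))) • W t) x
        + (W x)⁻¹ *
          iteratedDeriv (n / (S + 1) + 1)
            (fun t => (t ^ (n % (S + 1)) * (∏ j, (t - p j)) ^ (n / (S + 1))) • W t) x) x :=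
    hH.mul hFd
  -- apply the linear map `A ↦ A *ᵥ c`
  let L : Matrix (Fin N) (Fin N) ℂ →ₗ[ℂ] (Fin N → ℂ) :=
    { toFun := fun A => A *ᵥ c, map_add' := fun A B' => Matrix.add_mulVec A B' c,
      map_smul' := fun r A => smul_mulVec r A c }
  have hy := (L.toContinuousLinearMap.hasFDerivAt).comp_hasDerivAt x hG
  simp only [LinearMap.coe_toContinuousLinearMap', LinearMap.coe_mk, AddHom.coe_mk, L] at hy
  have hval :
      (∏ j, (x - p j))⁻¹ •
          (RodriguesP N S p (fun t => (∏ j, (t - p j))⁻¹ • W t) (n + S + 1) x *ᵥ c)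
        - (∑ j, (x - p j)⁻¹ • B j) *ᵥ (RodriguesP N S p W n x *ᵥ c)
      = (-((∑ j, (x - p j)⁻¹ • B j) * (W x)⁻¹) *
            iteratedDeriv (n / (S + 1))
              (fun t => (t ^ (n % (S + 1)) * (∏ j, (t - p j)) ^ (n / (S + 1))) • W t) x
          + (W x)⁻¹ *
            iteratedDeriv (n / (S + 1) + 1)
              (fun t => (t ^ (n % (S + 1)) * (∏ j, (t - p j)) ^ (n / (S + 1))) • W t) x) *ᵥ c := by
    rw [part2 n x hx]
    simp only [RodriguesP]
    rw [smul_mulVec, smul_smul, inv_mul_cancel₀ hq, one_smul,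
      Matrix.mulVec_mulVec, Matrix.add_mulVec, neg_mul, Matrix.neg_mulVec, Matrix.mul_assoc,
      sub_eq_add_neg, add_comm]
  rw [hval]
  exact hy
end

section
/- Assume condition (INV), let D be a simply connected domain containing p_0, …, p_{S+1}, let g be analytic on D, and let g̃ (analytic on D) and B̃(x) = B(x) + (Q'(x)/Q(x)) I be as produced by the shifting substitution y = y_0 + Q ỹ of the previous lemma. Then for every polynomial φ̃ ∈ ℂ^N[x] of degree at most S there exist a polynomial φ ∈ ℂ^N[x] of degree at most S and a polynomial y_φ ∈ ℂ^N[x] of degree at most S+1 such that the substitution y = y_φ(x) + Q(x) ỹ transforms the corrected equation y'(x) + B(x) y(x) = Q(x)^{−1}[g(x) − φ(x)] into the corrected shifted equation ỹ'(x) + B̃(x) ỹ(x) = Q(x)^{−1}[g̃(x) − φ̃(x)]. -/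
namespace Stmt16Aux

open Polynomial Matrix


variable {N S : ℕ}

noncomputable def Qp (p : Fin (S+2) → ℂ) : Polynomial ℂ := ∏ l, (X - C (p l))
noncomputable def Qj (p : Fin (S+2) → ℂ) (j : Fin (S+2)) : Polynomial ℂ :=
  ∏ l ∈ Finset.univ.erase j, (X - C (p l))

lemma Qp_monic (p : Fin (S+2) → ℂ) : (Qp p).Monic :=
  monic_prod_of_monic _ _ fun _ _ => monic_X_sub_C _

lemma Qj_monic (p : Fin (S+2) → ℂ) (j) : (Qj p j).Monic :=
  monic_prod_of_monic _ _ fun _ _ => monic_X_sub_C _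

lemma Qp_natDegree (p : Fin (S+2) → ℂ) : (Qp p).natDegree = S + 2 := by
  rw [Qp, natDegree_prod _ _ fun l _ => X_sub_C_ne_zero (p l)]
  simp

lemma Qj_natDegree (p : Fin (S+2) → ℂ) (j) : (Qj p j).natDegree = S + 1 := by
  rw [Qj, natDegree_prod _ _ fun l _ => X_sub_C_ne_zero (p l)]
  simp [Finset.card_erase_of_mem]

/-- The linear operator `w ↦ Q w' + Σ_j Q_j (B_j w)` acting componentwise. -/
noncomputable def L (p : Fin (S+2) → ℂ) (B : Fin (S+2) → Matrix (Fin N) (Fin N) ℂ)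
    (u : Fin N → Polynomial ℂ) : Fin N → Polynomial ℂ :=
  fun i => Qp p * derivative (u i) + ∑ j, Qj p j * ∑ k, C (B j i k) * u k

lemma L_add (p : Fin (S+2) → ℂ) (B : Fin (S+2) → Matrix (Fin N) (Fin N) ℂ) (u v : Fin N → Polynomial ℂ) : L p B (u + v) = L p B u + L p B v := by
  funext i
  simp only [L, Pi.add_apply, derivative_add, mul_add, Finset.mul_sum, Finset.sum_add_distrib]
  ring_nf

lemma L_smul (p : Fin (S+2) → ℂ) (B : Fin (S+2) → Matrix (Fin N) (Fin N) ℂ) (a : ℂ) (u : Fin N → Polynomial ℂ) : L p B (a • u) = a • L p B u := by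
  funext i
  simp only [L, Pi.smul_apply, smul_eq_C_mul, derivative_C_mul, mul_add, Finset.mul_sum]
  refine congrArg₂ (· + ·) ?_ ?_
  · ring
  · exact Finset.sum_congr rfl fun j _ => Finset.sum_congr rfl fun k _ => by ring

noncomputable def toPoly (c : Fin (S+2) → Fin N → ℂ) : Fin N → Polynomial ℂ :=
  fun i => ∑ m : Fin (S+2), C (c m i) * X ^ (m : ℕ)

lemma coeff_toPoly (c : Fin (S+2) → Fin N → ℂ) (i : Fin N) (n : ℕ) :
    (toPoly c i).coeff n = if h : n < S + 2 then c ⟨n, h⟩ i else 0 := by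
  rw [toPoly, finset_sum_coeff]
  simp only [coeff_C_mul, coeff_X_pow, mul_ite, mul_one, mul_zero]
  split
  · next h =>
    rw [Finset.sum_eq_single (⟨n, h⟩ : Fin (S+2))]
    · simp
    · intro b _ hb
      have : n ≠ (b : ℕ) := fun hc => hb (by ext; simp [hc.symm])
      simp [this]
    · simp
  · next h =>
    refine Finset.sum_eq_zero fun b _ => ?_
    have : n ≠ (b : ℕ) := fun hc => h (hc ▸ b.isLt)
    simp [this]

lemma toPoly_add (c d : Fin (S+2) → Fin N → ℂ) : toPoly (c + d) = toPoly c + toPoly d := by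
  funext i
  simp [toPoly, C_add, add_mul, Finset.sum_add_distrib]

lemma toPoly_smul (a : ℂ) (c : Fin (S+2) → Fin N → ℂ) : toPoly (a • c) = a • toPoly c := by
  funext i
  simp [toPoly, smul_eq_C_mul, Finset.mul_sum]
  exact Finset.sum_congr rfl fun m _ => by ring

lemma natDegree_toPoly_le (c : Fin (S+2) → Fin N → ℂ) (i : Fin N) (m : ℕ)
    (hc : ∀ b : Fin (S+2), m < (b : ℕ) → c b i = 0) : (toPoly c i).natDegree ≤ m := by
  refine natDegree_le_iff_coeff_eq_zero.2 fun n hn => ?_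
  rw [coeff_toPoly]
  split
  · next h => exact hc ⟨n, h⟩ hn
  · rfl


/-- coefficient of `L` at top degrees, for coefficient arrays supported in degrees `≤ m`. -/
lemma coeff_L_top (p : Fin (S+2) → ℂ) (B : Fin (S+2) → Matrix (Fin N) (Fin N) ℂ)
    (c : Fin (S+2) → Fin N → ℂ) (m : Fin (S+2))
    (hc : ∀ b : Fin (S+2), (m : ℕ) < (b : ℕ) → c b = 0) (i : Fin N) :
    (L p B (toPoly c) i).coeff (S + 1 + (m : ℕ))
      = ((m : ℕ) : ℂ) * c m i + ∑ k, (∑ j, B j i k) * c m k := by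
  have hdeg : ∀ k, (toPoly c k).natDegree ≤ (m : ℕ) := fun k =>
    natDegree_toPoly_le _ _ _ fun b hb => by rw [hc b hb]; rfl
  have hQp : (Qp p (S := S)).natDegree ≤ S + 2 := le_of_eq (Qp_natDegree p)
  have hQj : ∀ j, (Qj p j).natDegree ≤ S + 1 := fun j => le_of_eq (Qj_natDegree p j)
  rw [L, coeff_add]
  have h1 : (Qp p * derivative (toPoly c i)).coeff (S + 1 + (m : ℕ))
      = ((m : ℕ) : ℂ) * c m i := by
    rcases Nat.eq_zero_or_eq_succ_pred (m : ℕ) with hm | hm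
    · rw [hm]
      have : toPoly c i = C ((toPoly c i).coeff 0) :=
        eq_C_of_natDegree_le_zero (le_trans (hdeg i) (le_of_eq hm))
      rw [this]
      simp
    · set n := (m : ℕ) - 1 with hn
      have hmn : (m : ℕ) = n + 1 := hm
      have harith : S + 1 + (m : ℕ) = (S + 2) + n := by omega
      have hdu : (derivative (toPoly c i)).natDegree ≤ n := by
        have h1 := hdeg i
        have h2 := natDegree_derivative_le (toPoly c i)
        omega
      rw [harith, coeff_mul_add_eq_of_natDegree_le hQp hdu]
      have : (Qp p (S := S)).coeff (S + 2) = 1 := by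
        have := (Qp_monic (S := S) p).coeff_natDegree
        rwa [Qp_natDegree] at this
      rw [this, one_mul, coeff_derivative, coeff_toPoly]
      rw [dif_pos (by omega : n + 1 < S + 2)]
      have : (⟨n + 1, by omega⟩ : Fin (S + 2)) = m := by ext; simp only [Fin.val_mk]; omega
      rw [this]
      push_cast [hmn]
      ring
  have h2 : (∑ j, Qj p j * ∑ k, C (B j i k) * toPoly c k).coeff (S + 1 + (m : ℕ))
      = ∑ k, (∑ j, B j i k) * c m k := by
    rw [finset_sum_coeff]
    have hterm : ∀ j, (Qj p j * ∑ k, C (B j i k) * toPoly c k).coeff (S + 1 + (m : ℕ))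
        = ∑ k, B j i k * c m k := by
      intro j
      have hv : (∑ k, C (B j i k) * toPoly c k).natDegree ≤ (m : ℕ) :=
        natDegree_sum_le_of_forall_le _ _ fun k _ =>
          le_trans (natDegree_C_mul_le _ _) (hdeg k)
      rw [coeff_mul_add_eq_of_natDegree_le (hQj j) hv]
      have : (Qj p j).coeff (S + 1) = 1 := by
        have := (Qj_monic p j).coeff_natDegree
        rwa [Qj_natDegree] at this
      rw [this, one_mul, finset_sum_coeff]
      refine Finset.sum_congr rfl fun k _ => ?_
      rw [coeff_C_mul, coeff_toPoly, dif_pos m.isLt]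
    rw [Finset.sum_congr rfl fun j _ => hterm j, Finset.sum_comm]
    refine Finset.sum_congr rfl fun k _ => ?_
    rw [Finset.sum_mul]
  rw [h1, h2]

noncomputable def T (p : Fin (S+2) → ℂ) (B : Fin (S+2) → Matrix (Fin N) (Fin N) ℂ) :
    (Fin (S+2) → Fin N → ℂ) →ₗ[ℂ] (Fin (S+2) → Fin N → ℂ) where
  toFun c := fun m i => (L p B (toPoly c) i).coeff (S + 1 + (m : ℕ))
  map_add' c d := by
    funext m i
    simp only [toPoly_add, L_add, Pi.add_apply, coeff_add]
  map_smul' a c := by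
    funext m i
    simp only [toPoly_smul, L_smul, Pi.smul_apply, coeff_smul, smul_eq_mul, RingHom.id_apply]

lemma T_surjective (p : Fin (S+2) → ℂ) (B : Fin (S+2) → Matrix (Fin N) (Fin N) ℂ)
    (hB : ∀ k : ℕ, IsUnit ((k : ℂ) • (1 : Matrix (Fin N) (Fin N) ℂ) + ∑ j, B j)) :
    Function.Surjective (T p B) := by
  rw [← LinearMap.injective_iff_surjective]
  rw [← LinearMap.ker_eq_bot]
  rw [Submodule.eq_bot_iff]
  intro c hc
  rw [LinearMap.mem_ker] at hc
  by_contra hc0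
  have hne : (Finset.univ.filter fun b : Fin (S+2) => c b ≠ 0).Nonempty := by
    by_contra h
    rw [Finset.not_nonempty_iff_eq_empty, Finset.filter_eq_empty_iff] at h
    exact hc0 (funext fun b => by simpa using h (Finset.mem_univ b))
  set s := Finset.univ.filter fun b : Fin (S+2) => c b ≠ 0 with hs
  set m := s.max' hne with hm
  have hcm : c m ≠ 0 := (Finset.mem_filter.1 (s.max'_mem hne)).2
  have htop : ∀ b : Fin (S+2), (m : ℕ) < (b : ℕ) → c b = 0 := by
    intro b hb
    by_contra hb0
    have : b ∈ s := by rw [hs, Finset.mem_filter]; exact ⟨Finset.mem_univ b, hb0⟩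
    have hle : (b : ℕ) ≤ (m : ℕ) := s.le_max' b this
    omega
  have hval : (((m : ℕ) : ℂ) • (1 : Matrix (Fin N) (Fin N) ℂ) + ∑ j, B j) *ᵥ c m = 0 := by
    funext i
    have h0 : T p B c m i = 0 := by rw [hc]; rfl
    have := coeff_L_top p B c m htop i
    rw [show T p B c m i = (L p B (toPoly c) i).coeff (S + 1 + (m : ℕ)) from rfl, this] at h0
    rw [add_mulVec, smul_mulVec, one_mulVec]
    simpa [mulVec, dotProduct, Matrix.sum_apply] using h0
  have hinj := mulVec_injective_iff_isUnit.2 (hB (m : ℕ))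
  exact hcm (hinj (by rw [hval, mulVec_zero]))

/-- Main existence lemma: a polynomial `w` of degree ≤ S+1 such that
`Q φt − L w` has degree ≤ S. -/
lemma exists_w (p : Fin (S+2) → ℂ) (B : Fin (S+2) → Matrix (Fin N) (Fin N) ℂ)
    (hB : ∀ k : ℕ, IsUnit ((k : ℂ) • (1 : Matrix (Fin N) (Fin N) ℂ) + ∑ j, B j))
    (φt : Fin N → Polynomial ℂ) (hφt : ∀ i, (φt i).degree ≤ (S : ℕ)) :
    ∃ w : Fin N → Polynomial ℂ, (∀ i, (w i).degree ≤ ((S + 1 : ℕ) : WithBot ℕ)) ∧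
      ∀ i, (Qp p * φt i - L p B w i).degree ≤ (S : ℕ) := by
  obtain ⟨c, hc⟩ := T_surjective p B hB (fun m i => (Qp p * φt i).coeff (S + 1 + (m : ℕ)))
  refine ⟨toPoly c, fun i => ?_, fun i => ?_⟩
  · refine (degree_le_iff_coeff_zero _ _).2 fun n hn => ?_
    rw [Nat.cast_lt] at hn
    rw [coeff_toPoly, dif_neg (by omega)]
  · refine (degree_le_iff_coeff_zero _ _).2 fun n hn => ?_
    rw [Nat.cast_lt] at hn
    rw [coeff_sub]
    by_cases h : n ≤ 2 * S + 2
    · have hmlt : n - (S + 1) < S + 2 := by omega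
      have hTc := congrFun (congrFun hc (⟨n - (S + 1), hmlt⟩ : Fin (S + 2))) i
      rw [show T p B c ⟨n - (S + 1), hmlt⟩ i
          = (L p B (toPoly c) i).coeff (S + 1 + ((⟨n - (S + 1), hmlt⟩ : Fin (S + 2)) : ℕ))
          from rfl] at hTc
      have hn' : S + 1 + ((⟨n - (S + 1), hmlt⟩ : Fin (S + 2)) : ℕ) = n := by
        simp only [Fin.val_mk]; omega
      rw [hn'] at hTc
      rw [hTc, sub_self]
    · have hφn : (φt i).natDegree ≤ S := natDegree_le_iff_degree_le.2 (hφt i)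
      have hq := Qp_natDegree (S := S) p
      have hwS1 : ∀ k, (toPoly c k).natDegree ≤ S + 1 := fun k =>
        natDegree_toPoly_le c k (S + 1) fun b hb => absurd b.isLt (by omega)
      have h1 : (Qp p * φt i).natDegree ≤ 2 * S + 2 := by
        refine le_trans natDegree_mul_le ?_
        omega
      have h2 : (L p B (toPoly c) i).natDegree ≤ 2 * S + 2 := by
        rw [L]
        refine le_trans (natDegree_add_le _ _) (max_le ?_ ?_)
        · refine le_trans natDegree_mul_le ?_
          have hd := natDegree_derivative_le (toPoly c i)
          have := hwS1 i
          omega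
        · refine natDegree_sum_le_of_forall_le _ _ fun j _ => ?_
          refine le_trans natDegree_mul_le ?_
          have hqj := Qj_natDegree (S := S) p j
          have hv : (∑ k, C (B j i k) * toPoly c k).natDegree ≤ S + 1 :=
            natDegree_sum_le_of_forall_le _ _ fun k _ =>
              le_trans (natDegree_C_mul_le _ _) (hwS1 k)
          omega
      rw [coeff_eq_zero_of_natDegree_lt (lt_of_le_of_lt h1 (by omega)),
        coeff_eq_zero_of_natDegree_lt (lt_of_le_of_lt h2 (by omega)), sub_self]




lemma iff_of_sub_eq {M : Type*} [AddCommGroup M] {a b c d : M} (h : a - c = b - d) :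
    (a = b) ↔ (c = d) := by
  constructor
  · intro h2; rwa [h2, sub_right_inj] at h
  · intro h2; rwa [h2, sub_left_inj] at h

end Stmt16Aux


open Matrix Set

/-- `SolvesAt N S p B rhs y x` : `y' (x) + B(x) y(x) = Q(x)⁻¹ rhs(x)`, where
`B(x) = Σⱼ (x − pⱼ)⁻¹ Bⱼ` and `Q(x) = Πⱼ (x − pⱼ)`. -/
def SolvesAt (N S : ℕ) (p : Fin (S + 2) → ℂ)
    (B : Fin (S + 2) → Matrix (Fin N) (Fin N) ℂ)
    (rhs y : ℂ → Fin N → ℂ) (x : ℂ) : Prop :=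
  deriv y x + (∑ j, (x - p j)⁻¹ • B j) *ᵥ y x = (∏ l, (x - p l))⁻¹ • rhs x

/-- `SolvesShiftedAt N S p B rhs y x` : `y' (x) + B̃(x) y(x) = Q(x)⁻¹ rhs(x)`, where
`B̃(x) = B(x) + (Q'(x)/Q(x)) I`. -/
noncomputable def SolvesShiftedAt (N S : ℕ) (p : Fin (S + 2) → ℂ)
    (B : Fin (S + 2) → Matrix (Fin N) (Fin N) ℂ)
    (rhs y : ℂ → Fin N → ℂ) (x : ℂ) : Prop :=
  deriv y x
      + ((∑ j, (x - p j)⁻¹ • B j)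
          + (deriv (fun t => ∏ l, (t - p l)) x / ∏ l, (x - p l)) •
              (1 : Matrix (Fin N) (Fin N) ℂ)) *ᵥ y x
    = (∏ l, (x - p l))⁻¹ • rhs x

/-- Lemma 10 (corrections can be pulled back through the shifting substitution):
assume (INV), let `y = y₀ + Q ỹ` be the substitution of the previous lemma taking
`y' + B y = Q⁻¹ g` to `ỹ' + B̃ ỹ = Q⁻¹ g̃`. Then for every polynomial `φ̃` of degree at
most `S` there are polynomials `φ` of degree at most `S` and `y_φ` of degree at most
`S+1` such that `y = y_φ + Q ỹ` takes `y' + B y = Q⁻¹ (g − φ)` to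
`ỹ' + B̃ ỹ = Q⁻¹ (g̃ − φ̃)`. -/
theorem stmt_16 (N S : ℕ) (hN : 1 ≤ N)
    (p : Fin (S + 2) → ℂ) (hp : Function.Injective p)
    (B : Fin (S + 2) → Matrix (Fin N) (Fin N) ℂ)
    (hinv : ∀ k : ℕ,
      (∀ j, IsUnit ((k : ℂ) • (1 : Matrix (Fin N) (Fin N) ℂ) + B j)) ∧
        IsUnit ((k : ℂ) • (1 : Matrix (Fin N) (Fin N) ℂ) + ∑ j, B j))
    (D : Set ℂ) (hD : IsOpen D) (hDc : IsPreconnected D)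
    (hDsc : SimplyConnectedSpace D) (hpD : ∀ j, p j ∈ D)
    (g : ℂ → Fin N → ℂ) (hg : AnalyticOnNhd ℂ g D)
    (y₀p : Fin N → Polynomial ℂ) (hy₀p : ∀ i, (y₀p i).degree ≤ (S + 1 : ℕ))
    (gt : ℂ → Fin N → ℂ) (hgt : AnalyticOnNhd ℂ gt D)
    (hsub : ∀ yt : ℂ → Fin N → ℂ, ∀ x ∈ D \ Set.range p, DifferentiableAt ℂ yt x →
      (SolvesAt N S p B g
          (fun t => (fun i => (y₀p i).eval t) + (∏ l, (t - p l)) • yt t) x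
        ↔ SolvesShiftedAt N S p B gt yt x)) :
    ∀ φt : Fin N → Polynomial ℂ, (∀ i, (φt i).degree ≤ (S : ℕ)) →
      ∃ φ yφ : Fin N → Polynomial ℂ,
        (∀ i, (φ i).degree ≤ (S : ℕ)) ∧ (∀ i, (yφ i).degree ≤ (S + 1 : ℕ)) ∧
        ∀ yt : ℂ → Fin N → ℂ, ∀ x ∈ D \ Set.range p, DifferentiableAt ℂ yt x →
          (SolvesAt N S p B (fun t => g t - fun i => (φ i).eval t)
              (fun t => (fun i => (yφ i).eval t) + (∏ l, (t - p l)) • yt t) x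
            ↔ SolvesShiftedAt N S p B (fun t => gt t - fun i => (φt i).eval t) yt x) := by
  intro φt hφt
  obtain ⟨w, hwdeg, hφdeg⟩ := Stmt16Aux.exists_w p B (fun k => (hinv k).2) φt hφt
  refine ⟨fun i => Stmt16Aux.Qp p * φt i - Stmt16Aux.L p B w i, fun i => y₀p i + w i,
    hφdeg, fun i => le_trans (Polynomial.degree_add_le _ _) (max_le (hy₀p i) (hwdeg i)),
    ?_⟩
  intro yt x hx hyt
  obtain ⟨hxD, hxr⟩ := hx
  have hxp : ∀ j, x - p j ≠ 0 := fun j => sub_ne_zero.2 fun h => hxr ⟨j, h.symm⟩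
  simp only [SolvesAt, SolvesShiftedAt]
  set Qx : ℂ := ∏ l, (x - p l) with hQxdef
  set Bx : Matrix (Fin N) (Fin N) ℂ := ∑ j, (x - p j)⁻¹ • B j with hBxdef
  have hQx : Qx ≠ 0 := Finset.prod_ne_zero_iff.2 fun l _ => hxp l
  set Q'x : ℂ := Polynomial.eval x (Polynomial.derivative (Stmt16Aux.Qp p)) with hQ'def
  have hQder : HasDerivAt (fun t => ∏ l, (t - p l)) Q'x x := by
    have : (fun t : ℂ => ∏ l, (t - p l)) = fun t => Polynomial.eval t (Stmt16Aux.Qp p) := by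
      funext t
      simp [Stmt16Aux.Qp, Polynomial.eval_prod]
    rw [this]
    exact Polynomial.hasDerivAt _ x
  rw [hQder.deriv]
  -- the fundamental identity produced by `hsub`
  have hI1 : (fun i => Polynomial.eval x (Polynomial.derivative (y₀p i)))
        + Bx *ᵥ (fun i => Polynomial.eval x (y₀p i)) + gt x = Qx⁻¹ • g x := by
    have hder0 : HasDerivAt (fun t : ℂ => (t - x) • (Qx⁻¹ • gt x)) (Qx⁻¹ • gt x) x := by
      simpa using ((hasDerivAt_id x).sub_const x).smul_const (Qx⁻¹ • gt x)
    have hshift : SolvesShiftedAt N S p B gt (fun t : ℂ => (t - x) • (Qx⁻¹ • gt x)) x := by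
      simp only [SolvesShiftedAt]
      rw [hder0.deriv]
      simp [sub_self]
      rfl
    have hS := (hsub _ x ⟨hxD, hxr⟩ hder0.differentiableAt).mpr hshift
    simp only [SolvesAt] at hS
    have hd1 : deriv (fun t => (fun i => Polynomial.eval t (y₀p i))
          + (∏ l, (t - p l)) • ((t - x) • (Qx⁻¹ • gt x))) x
        = (fun i => Polynomial.eval x (Polynomial.derivative (y₀p i)))
          + (Qx • (Qx⁻¹ • gt x) + Q'x • ((x - x) • (Qx⁻¹ • gt x))) := by
      refine HasDerivAt.deriv (HasDerivAt.add ?_ ?_)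
      · exact hasDerivAt_pi.mpr fun i => Polynomial.hasDerivAt _ x
      · exact hQder.smul hder0
    rw [hd1] at hS
    simp only [sub_self, zero_smul, smul_zero, add_zero] at hS
    rw [smul_smul, mul_inv_cancel₀ hQx, one_smul] at hS
    rw [← hS]
    abel
  -- derivative of the substituted function
  have hd2 : deriv (fun t => (fun i => Polynomial.eval t (y₀p i + w i))
        + (∏ l, (t - p l)) • yt t) x
      = (fun i => Polynomial.eval x (Polynomial.derivative (y₀p i + w i)))
        + (Qx • deriv yt x + Q'x • yt x) := by
    refine HasDerivAt.deriv (HasDerivAt.add ?_ ?_)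
    · exact hasDerivAt_pi.mpr fun i => Polynomial.hasDerivAt _ x
    · exact hQder.smul hyt.hasDerivAt
  rw [hd2]
  -- splitting the polynomial evaluations
  have hsplit : (fun i => Polynomial.eval x (y₀p i + w i))
      = (fun i => Polynomial.eval x (y₀p i)) + fun i => Polynomial.eval x (w i) := by
    funext i; simp
  have hsplitd : (fun i => Polynomial.eval x (Polynomial.derivative (y₀p i + w i)))
      = (fun i => Polynomial.eval x (Polynomial.derivative (y₀p i)))
        + fun i => Polynomial.eval x (Polynomial.derivative (w i)) := by
    funext i; simp
  -- the key polynomial identity, evaluated at x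
  have hstar : (fun i => Polynomial.eval x (Stmt16Aux.Qp p * φt i - Stmt16Aux.L p B w i))
      = Qx • (fun i => Polynomial.eval x (φt i))
        - Qx • (fun i => Polynomial.eval x (Polynomial.derivative (w i)))
        - Qx • (Bx *ᵥ fun i => Polynomial.eval x (w i)) := by
    funext i
    have hQjx : ∀ j, Polynomial.eval x (Stmt16Aux.Qj p j) = Qx * (x - p j)⁻¹ := by
      intro j
      have h1 : Polynomial.eval x (Stmt16Aux.Qj p j) * (x - p j) = Qx := by
        rw [hQxdef, Stmt16Aux.Qj, Polynomial.eval_prod]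
        simp only [Polynomial.eval_sub, Polynomial.eval_X, Polynomial.eval_C]
        exact Finset.prod_erase_mul _ _ (Finset.mem_univ j)
      rw [← h1, mul_inv_cancel_right₀ (hxp j)]
    have hQpx : Polynomial.eval x (Stmt16Aux.Qp p) = Qx := by
      rw [hQxdef, Stmt16Aux.Qp, Polynomial.eval_prod]; simp
    simp only [Stmt16Aux.L, Polynomial.eval_sub, Polynomial.eval_add, Polynomial.eval_mul,
      Polynomial.eval_finset_sum, Polynomial.eval_C, hQpx, Pi.sub_apply, Pi.smul_apply,
      smul_eq_mul, Matrix.mulVec, dotProduct, hBxdef, Matrix.sum_apply,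
      Matrix.smul_apply, hQjx]
    rw [sub_sub]
    congr 1
    congr 1
    simp only [Finset.mul_sum, Finset.sum_mul]
    rw [Finset.sum_comm]
    exact Finset.sum_congr rfl fun j _ => Finset.sum_congr rfl fun k _ => by ring
  have hcan : ∀ v : Fin N → ℂ, Qx • Qx⁻¹ • v = v := fun v => by
    rw [smul_smul, mul_inv_cancel₀ hQx, one_smul]
  have hcan' : ∀ v : Fin N → ℂ, Qx⁻¹ • Qx • v = v := fun v => by
    rw [smul_smul, inv_mul_cancel₀ hQx, one_smul]
  have hQQ : Qx * (Q'x / Qx) = Q'x := by field_simp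
  have hstar' : Qx⁻¹ • (fun i => Polynomial.eval x (Stmt16Aux.Qp p * φt i - Stmt16Aux.L p B w i))
      = (fun i => Polynomial.eval x (φt i))
        - (fun i => Polynomial.eval x (Polynomial.derivative (w i)))
        - Bx *ᵥ (fun i => Polynomial.eval x (w i)) := by
    rw [hstar, smul_sub, smul_sub, hcan', hcan', hcan']
  refine (Stmt16Aux.iff_of_sub_eq ?_).trans ((smul_right_injective (Fin N → ℂ) hQx).eq_iff)
  rw [hsplitd, hsplit, smul_sub, hstar', ← hI1]
  rw [add_mulVec, smul_mulVec, one_mulVec, mulVec_add, mulVec_add, Matrix.mulVec_smul]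
  rw [smul_add, smul_add, smul_smul, hQQ, hcan]
  abel
end
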